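/- arXiv:1506.01749 — 7 statements merged into one kernel-verified Lean document; each statement's English description precedes it below -/
import Mathlib

section
/- Every connected finite graph with b > 0 branches has max leaf number at most 2b. -/
open SimpleGraph
open scoped Classical

variable {V : Type*}

/-- A walk is *branch-like* if it is a path or a cycle and every internal vertex
(vertex other than the endpoints) has degree two in `G`. -/
def IsBranchLike (G : SimpleGraph V) {u v : V} (W : G.Walk u v) : Prop :=
  (W.IsPath ∨ ∃ h : v = u, (W.copy rfl h).IsCycle) ∧
  ∀ x ∈ W.support, x ≠ u → x ≠ v → (G.neighborSet x).ncard = 2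

/-- A *branch* of `G` is a maximal branch-like walk (maximal with respect to
containment of edges). -/
def IsBranch (G : SimpleGraph V) {u v : V} (W : G.Walk u v) : Prop :=
  IsBranchLike G W ∧
  ∀ (u' v' : V) (W' : G.Walk u' v'), IsBranchLike G W' →
    (∀ e ∈ W.edges, e ∈ W'.edges) → (∀ e ∈ W'.edges, e ∈ W.edges)

/-- The branches of `G`, identified by their edge sets. -/
def branchSet (G : SimpleGraph V) : Set (Set (Sym2 V)) :=
  {E | ∃ (u v : V) (W : G.Walk u v), IsBranch G W ∧ E = {e | e ∈ W.edges}}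

/-- The number of branches of `G`. -/
noncomputable def branchCount (G : SimpleGraph V) : ℕ := (branchSet G).ncard

/-- The number of leaves (degree-one vertices) of a graph. -/
noncomputable def leafCount (T : SimpleGraph V) : ℕ :=
  {v : V | (T.neighborSet v).ncard = 1}.ncard

/-- The max leaf number of `G`: the maximum number of leaves over all spanning
trees of `G`. -/
noncomputable def maxLeafNumber (G : SimpleGraph V) : ℕ :=
  sSup {k | ∃ T : SimpleGraph V, T ≤ G ∧ T.IsTree ∧ k = leafCount T}

/-- The indistinct set for a vertex `s` and two branches `A`, `B`: pairs of
distinct vertices, one from each branch, that `s` fails to distinguish. -/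
def indistinctSet (G : SimpleGraph V) (s : V) {a₁ a₂ b₁ b₂ : V}
    (A : G.Walk a₁ a₂) (B : G.Walk b₁ b₂) : Set (V × V) :=
  {p : V × V | p.1 ∈ A.support ∧ p.2 ∈ B.support ∧ p.1 ≠ p.2 ∧
    G.dist s p.1 = G.dist s p.2}

/-- A locating set for `G`. -/
def IsLocatingSet (G : SimpleGraph V) (S : Set V) : Prop :=
  ∀ u v : V, u ≠ v → ∃ w ∈ S, G.dist u w ≠ G.dist v w

/-- The metric dimension of `G`: minimum cardinality of a locating set. -/
noncomputable def metricDim (G : SimpleGraph V) : ℕ :=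
  sInf {k | ∃ S : Set V, IsLocatingSet G S ∧ S.ncard = k}

lemma mem_support_of_mem_edges'' {G : SimpleGraph V} {u v x : V} {W : G.Walk u v} {e : Sym2 V}
    (he : e ∈ W.edges) (hx : x ∈ e) : x ∈ W.support := by
  induction e with
  | h a b =>
    rcases Sym2.mem_iff.mp hx with rfl | rfl
    · exact W.fst_mem_support_of_mem_edges he
    · exact W.snd_mem_support_of_mem_edges he

lemma path_start_edge_unique {G : SimpleGraph V} {u v : V} {W : G.Walk u v}
    (hW : W.IsPath) : ∀ e₁ ∈ W.edges, ∀ e₂ ∈ W.edges, u ∈ e₁ → u ∈ e₂ → e₁ = e₂ := by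
  induction W with
  | nil => simp
  | @cons a b c h p ih =>
    rw [Walk.cons_isPath_iff] at hW
    have key : ∀ e ∈ (Walk.cons h p).edges, a ∈ e → e = s(a, b) := by
      intro e he hae
      rw [Walk.edges_cons, List.mem_cons] at he
      rcases he with rfl | he
      · rfl
      · exact absurd (mem_support_of_mem_edges'' he hae) hW.2
    intro e₁ h₁ e₂ h₂ hu₁ hu₂
    rw [key e₁ h₁ hu₁, key e₂ h₂ hu₂]

lemma path_end_edge_unique {G : SimpleGraph V} {u v : V} {W : G.Walk u v}
    (hW : W.IsPath) : ∀ e₁ ∈ W.edges, ∀ e₂ ∈ W.edges, v ∈ e₁ → v ∈ e₂ → e₁ = e₂ := by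
  intro e₁ h₁ e₂ h₂ hv₁ hv₂
  have h₁' : e₁ ∈ W.reverse.edges := by rw [Walk.edges_reverse, List.mem_reverse]; exact h₁
  have h₂' : e₂ ∈ W.reverse.edges := by rw [Walk.edges_reverse, List.mem_reverse]; exact h₂
  exact path_start_edge_unique hW.reverse e₁ h₁' e₂ h₂' hv₁ hv₂

lemma ncard_neighborSet_eq_degree' [Fintype V] (G : SimpleGraph V) (v : V) :
    (G.neighborSet v).ncard = G.degree v := by
  classical
  rw [Set.ncard_eq_toFinset_card', Set.toFinset_card, card_neighborSet_eq_degree]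

lemma cycle_two_edges {G : SimpleGraph V} {u : V} {W : G.Walk u u} (hC : W.IsCycle) :
    ∃ e₁ e₂ : Sym2 V, ∀ e ∈ W.edges, u ∈ e → e = e₁ ∨ e = e₂ := by
  classical
  cases W with
  | nil => exact absurd rfl (Walk.isCycle_def _ |>.mp hC).2.1
  | @cons _ b _ h p =>
    have hpty : p.IsPath := by
      apply Walk.IsPath.mk'
      have := (Walk.isCycle_def _ |>.mp hC).2.2
      rwa [Walk.support_cons, List.tail_cons] at this
    by_cases h2 : ∃ e ∈ p.edges, u ∈ e
    · refine ⟨s(u, b), h2.choose, ?_⟩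
      intro e he hu
      rw [Walk.edges_cons, List.mem_cons] at he
      rcases he with rfl | he
      · exact Or.inl rfl
      · exact Or.inr (path_end_edge_unique hpty e he h2.choose h2.choose_spec.1 hu
          h2.choose_spec.2)
    · refine ⟨s(u, b), s(u, b), ?_⟩
      intro e he hu
      rw [Walk.edges_cons, List.mem_cons] at he
      rcases he with rfl | he
      · exact Or.inl rfl
      · exact absurd ⟨e, he, hu⟩ h2

lemma branchlike_pairs [Fintype V] {G : SimpleGraph V} {u v : V}
    {W : G.Walk u v} (hW : IsBranchLike G W) :
    ∃ p₁ p₂ : V × Sym2 V, ∀ x e, e ∈ W.edges → x ∈ e → G.degree x ≠ 2 →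
      (x, e) = p₁ ∨ (x, e) = p₂ := by
  classical
  obtain ⟨hpc, hint⟩ := hW
  have hend : ∀ x (e : Sym2 V), e ∈ W.edges → x ∈ e → G.degree x ≠ 2 → x = u ∨ x = v := by
    intro x e he hx hdeg
    by_contra hcon
    push_neg at hcon
    have h2' := hint x (mem_support_of_mem_edges'' he hx) hcon.1 hcon.2
    rw [ncard_neighborSet_eq_degree'] at h2'
    exact hdeg h2'
  rcases hpc with hP | ⟨hvu, hC⟩
  · -- path case
    by_cases h1 : ∃ e ∈ W.edges, u ∈ e
    · by_cases h2 : ∃ e ∈ W.edges, v ∈ e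
      · refine ⟨(u, h1.choose), (v, h2.choose), ?_⟩
        intro x e he hx hdeg
        rcases hend x e he hx hdeg with rfl | rfl
        · exact Or.inl (by rw [path_start_edge_unique hP e he h1.choose h1.choose_spec.1 hx
            h1.choose_spec.2])
        · exact Or.inr (by rw [path_end_edge_unique hP e he h2.choose h2.choose_spec.1 hx
            h2.choose_spec.2])
      · refine ⟨(u, h1.choose), (u, h1.choose), ?_⟩
        intro x e he hx hdeg
        rcases hend x e he hx hdeg with rfl | rfl
        · exact Or.inl (by rw [path_start_edge_unique hP e he h1.choose h1.choose_spec.1 hx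
            h1.choose_spec.2])
        · exact absurd ⟨e, he, hx⟩ h2
    · by_cases h2 : ∃ e ∈ W.edges, v ∈ e
      · refine ⟨(v, h2.choose), (v, h2.choose), ?_⟩
        intro x e he hx hdeg
        rcases hend x e he hx hdeg with rfl | rfl
        · exact absurd ⟨e, he, hx⟩ h1
        · exact Or.inl (by rw [path_end_edge_unique hP e he h2.choose h2.choose_spec.1 hx
            h2.choose_spec.2])
      · refine ⟨(u, s(u, u)), (u, s(u, u)), ?_⟩
        intro x e he hx hdeg
        rcases hend x e he hx hdeg with rfl | rfl
        · exact absurd ⟨e, he, hx⟩ h1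
        · exact absurd ⟨e, he, hx⟩ h2
  · -- cycle case
    subst hvu
    rw [Walk.copy_rfl_rfl] at hC
    obtain ⟨e₁, e₂, hcyc⟩ := cycle_two_edges hC
    refine ⟨(v, e₁), (v, e₂), ?_⟩
    intro x e he hx hdeg
    rcases hend x e he hx hdeg with rfl | rfl <;>
    · rcases hcyc e he hx with rfl | rfl
      · exact Or.inl rfl
      · exact Or.inr rfl

lemma branchSet_finite [Fintype V] (G : SimpleGraph V) : (branchSet G).Finite := by
  apply Set.Finite.subset (Set.Finite.finite_subsets G.edgeSet.toFinite)
  rintro E ⟨u, v, W, _, rfl⟩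
  intro e he
  exact W.edges_subset_edgeSet he

lemma exists_branch_extending [Fintype V] {G : SimpleGraph V} {u v : V}
    (W₀ : G.Walk u v) (h₀ : IsBranchLike G W₀) :
    ∃ (u' v' : V) (W : G.Walk u' v'), IsBranch G W ∧ ∀ e ∈ W₀.edges, e ∈ W.edges := by
  classical
  set S : Set (Set (Sym2 V)) :=
    {s | ∃ (u' v' : V) (W : G.Walk u' v'), IsBranchLike G W ∧
      (∀ e ∈ W₀.edges, e ∈ W.edges) ∧ s = {e | e ∈ W.edges}} with hS
  have hfin : S.Finite := by
    apply Set.Finite.subset (Set.Finite.finite_subsets G.edgeSet.toFinite)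
    rintro E ⟨u', v', W, _, _, rfl⟩
    intro e he
    exact W.edges_subset_edgeSet he
  have hne : S.Nonempty := ⟨{e | e ∈ W₀.edges}, u, v, W₀, h₀, fun e he => he, rfl⟩
  obtain ⟨smax, hmem, hmax⟩ := Set.Finite.exists_maximalFor id S hfin hne
  obtain ⟨u', v', W, hBL, hext, rfl⟩ := hmem
  refine ⟨u', v', W, ⟨hBL, ?_⟩, hext⟩
  intro a b W' hBL' hsub e he
  have hmem' : {e | e ∈ W'.edges} ∈ S :=
    ⟨a, b, W', hBL', fun e' he' => hsub e' (hext e' he'), rfl⟩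
  have := hmax hmem' (fun e' he' => hsub e' he')
  simp only [id] at this
  exact this he

lemma exists_branch_edge [Fintype V] {G : SimpleGraph V} {e : Sym2 V}
    (he : e ∈ G.edgeSet) : ∃ E ∈ branchSet G, e ∈ E := by
  classical
  induction e with
  | h a b =>
    have hadj : G.Adj a b := he
    have hBL : IsBranchLike G (Walk.cons hadj Walk.nil) := by
      constructor
      · left
        rw [Walk.isPath_def]
        simp [hadj.ne]
      · intro x hx hxa hxb
        simp only [Walk.support_cons, Walk.support_nil, List.mem_cons,
          List.mem_singleton] at hx
        rcases hx with rfl | hx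
        · exact absurd rfl hxa
        · simp at hx
          exact absurd hx hxb
    obtain ⟨u', v', W, hbr, hext⟩ := exists_branch_extending _ hBL
    refine ⟨{e | e ∈ W.edges}, ⟨u', v', W, hbr, rfl⟩, ?_⟩
    exact hext s(a, b) (by simp)

lemma degree_sum_le_twice_branchCount [Fintype V] (G : SimpleGraph V) :
    ∑ v ∈ Finset.univ.filter (fun v => G.degree v ≠ 2), G.degree v
      ≤ 2 * branchCount G := by
  classical
  set P : Finset (V × Sym2 V) :=
    (Finset.univ.filter fun v => G.degree v ≠ 2).biUnion
      (fun v => (G.incidenceFinset v).image fun e => (v, e)) with hPdef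
  have hPmem : ∀ p ∈ P, p.2 ∈ G.edgeSet ∧ p.1 ∈ p.2 ∧ G.degree p.1 ≠ 2 := by
    intro p hp
    rw [hPdef, Finset.mem_biUnion] at hp
    obtain ⟨v, hv, hp⟩ := hp
    rw [Finset.mem_image] at hp
    obtain ⟨e, he, rfl⟩ := hp
    rw [mem_incidenceFinset] at he
    exact ⟨he.1, he.2, (Finset.mem_filter.mp hv).2⟩
  have hPcard : P.card = ∑ v ∈ Finset.univ.filter (fun v => G.degree v ≠ 2), G.degree v := by
    rw [hPdef, Finset.card_biUnion]
    · apply Finset.sum_congr rfl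
      intro v _
      rw [Finset.card_image_of_injective _ (fun e₁ e₂ h => (Prod.mk.injEq _ _ _ _).mp h |>.2),
        card_incidenceFinset_eq_degree]
    · intro x _ y _ hxy
      simp only [Finset.disjoint_left, Finset.mem_image]
      rintro p ⟨e, _, rfl⟩ ⟨e', _, h⟩
      exact hxy ((Prod.mk.injEq _ _ _ _).mp h |>.1).symm
  -- the choice of a branch containing each edge
  have hch : ∀ p : V × Sym2 V, p.2 ∈ G.edgeSet → ∃ E ∈ branchSet G, p.2 ∈ E :=
    fun p hp => exists_branch_edge hp
  set f : V × Sym2 V → Set (Sym2 V) :=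
    fun p => if h : p.2 ∈ G.edgeSet then (hch p h).choose else ∅ with hfdef
  have hf : ∀ p ∈ P, f p ∈ branchSet G ∧ p.2 ∈ f p := by
    intro p hp
    have h := (hPmem p hp).1
    rw [hfdef]
    simp only [dif_pos h]
    exact ⟨(hch p h).choose_spec.1, (hch p h).choose_spec.2⟩
  have key : P.card ≤ 2 * (P.image f).card := by
    apply Finset.card_le_mul_card_image
    intro E hE
    obtain ⟨p₀, hp₀, rfl⟩ := Finset.mem_image.mp hE
    obtain ⟨u, v, W, hWbr, hEdef⟩ := (hf p₀ hp₀).1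
    obtain ⟨p₁, p₂, hpair⟩ := branchlike_pairs hWbr.1
    have hsub : (P.filter fun a => f a = f p₀) ⊆ {p₁, p₂} := by
      intro q hq
      rw [Finset.mem_filter] at hq
      have h1 := (hf q hq.1).2
      rw [hq.2, hEdef] at h1
      have h2 := hPmem q hq.1
      have := hpair q.1 q.2 h1 h2.2.1 h2.2.2
      rw [Finset.mem_insert, Finset.mem_singleton]
      rcases this with h | h
      · exact Or.inl (by rw [← h])
      · exact Or.inr (by rw [← h])
    calc (P.filter fun a => f a = f p₀).card ≤ ({p₁, p₂} : Finset (V × Sym2 V)).card :=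
          Finset.card_le_card hsub
      _ ≤ 2 := Finset.card_insert_le _ _ |>.trans (by simp)
  have himg : (P.image f).card ≤ branchCount G := by
    have hsub : ↑(P.image f) ⊆ branchSet G := by
      intro E hE
      obtain ⟨p, hp, rfl⟩ := Finset.mem_image.mp (Finset.mem_coe.mp hE)
      exact (hf p hp).1
    have := Set.ncard_le_ncard hsub (branchSet_finite G)
    rwa [Set.ncard_coe_finset] at this
  omega

lemma degree_pos_of_connected [Fintype V] {G : SimpleGraph V} (hG : G.Connected)
    (hn : 2 ≤ Fintype.card V) (v : V) : 0 < G.degree v := by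
  classical
  obtain ⟨w, hw⟩ := Fintype.exists_ne_of_one_lt_card (by omega) v
  obtain ⟨p⟩ := hG.preconnected v w
  cases p with
  | nil => exact absurd rfl hw.symm
  | cons h _ => exact (G.degree_pos_iff_exists_adj v).mpr ⟨_, h⟩

lemma leafCount_eq_card [Fintype V] (T : SimpleGraph V) :
    leafCount T = (Finset.univ.filter fun v => T.degree v = 1).card := by
  classical
  unfold leafCount
  rw [Set.ncard_eq_toFinset_card', Set.toFinset_setOf]
  congr 1
  apply Finset.filter_congr
  intro v _
  rw [ncard_neighborSet_eq_degree']

lemma leafCount_tree_le [Fintype V] {G T : SimpleGraph V}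
    (hle : T ≤ G) (hT : T.IsTree) (hn : 2 ≤ Fintype.card V) :
    (leafCount T : ℤ) ≤ 2 + ∑ v ∈ Finset.univ.filter (fun v => 3 ≤ G.degree v),
      ((G.degree v : ℤ) - 2) := by
  classical
  have hdpos : ∀ v, 0 < T.degree v := degree_pos_of_connected hT.isConnected hn
  have hdle : ∀ v, T.degree v ≤ G.degree v := by
    intro v
    apply Finset.card_le_card
    intro x hx
    rw [mem_neighborFinset] at hx ⊢
    exact hle hx
  have hsum : ∑ v : V, (T.degree v : ℤ) = 2 * Fintype.card V - 2 := by
    have h1 := T.sum_degrees_eq_twice_card_edges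
    have h2 := hT.card_edgeFinset
    have h3 : (∑ v : V, (T.degree v : ℤ)) = 2 * (T.edgeFinset.card : ℤ) := by
      exact_mod_cast h1
    have h4 : (T.edgeFinset.card : ℤ) + 1 = (Fintype.card V : ℤ) := by exact_mod_cast h2
    omega
  have hkey : ∑ v : V, (2 - (T.degree v : ℤ)) = 2 := by
    rw [Finset.sum_sub_distrib, hsum]
    simp [Finset.card_univ]
    ring
  have hsplit := Finset.sum_filter_add_sum_filter_not Finset.univ
    (fun v => T.degree v = 1) (fun v => 2 - (T.degree v : ℤ))
  have hleaf : ∑ v ∈ Finset.univ.filter (fun v => T.degree v = 1),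
      (2 - (T.degree v : ℤ)) = (leafCount T : ℤ) := by
    rw [leafCount_eq_card]
    have hc : ∀ v ∈ Finset.univ.filter (fun v => T.degree v = 1),
        (2 - (T.degree v : ℤ)) = 1 := by
      intro v hv
      have h := (Finset.mem_filter.mp hv).2
      rw [h]
      norm_num
    rw [Finset.sum_congr rfl hc, Finset.sum_const, nsmul_eq_mul, mul_one]
  have e2 : ∑ v ∈ Finset.univ.filter (fun v => ¬T.degree v = 1), (2 - (T.degree v : ℤ))
      = ∑ v ∈ Finset.univ.filter (fun v => 3 ≤ T.degree v), (2 - (T.degree v : ℤ)) := by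
    apply (Finset.sum_subset ?_ ?_).symm
    · intro v hv
      rw [Finset.mem_filter] at hv ⊢
      refine ⟨hv.1, by omega⟩
    · intro v hv hnv
      rw [Finset.mem_filter] at hv hnv
      have h1 : T.degree v ≠ 1 := hv.2
      have h2 : ¬ 3 ≤ T.degree v := fun h => hnv ⟨hv.1, h⟩
      have h3 := hdpos v
      have h4 : T.degree v = 2 := by omega
      rw [h4]
      norm_num
  have e1 : ∑ v ∈ Finset.univ.filter (fun v => 3 ≤ T.degree v), ((T.degree v : ℤ) - 2)
      = - ∑ v ∈ Finset.univ.filter (fun v => 3 ≤ T.degree v), (2 - (T.degree v : ℤ)) := by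
    rw [← Finset.sum_neg_distrib]
    apply Finset.sum_congr rfl
    intro v _
    ring
  have step1 : ∑ v ∈ Finset.univ.filter (fun v => 3 ≤ T.degree v), ((T.degree v : ℤ) - 2)
      ≤ ∑ v ∈ Finset.univ.filter (fun v => 3 ≤ T.degree v), ((G.degree v : ℤ) - 2) := by
    apply Finset.sum_le_sum
    intro v _
    have := hdle v
    omega
  have step2 : ∑ v ∈ Finset.univ.filter (fun v => 3 ≤ T.degree v), ((G.degree v : ℤ) - 2)
      ≤ ∑ v ∈ Finset.univ.filter (fun v => 3 ≤ G.degree v), ((G.degree v : ℤ) - 2) := by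
    apply Finset.sum_le_sum_of_subset_of_nonneg
    · intro v hv
      rw [Finset.mem_filter] at hv ⊢
      exact ⟨hv.1, le_trans hv.2 (hdle v)⟩
    · intro v hv _
      rw [Finset.mem_filter] at hv
      have := hv.2
      omega
  linarith

lemma glue_ineq [Fintype V] {G : SimpleGraph V} (hG : G.Connected)
    (hn : 2 ≤ Fintype.card V) (hnot : ¬ ∀ v, G.degree v = 2) :
    2 + ∑ v ∈ Finset.univ.filter (fun v => 3 ≤ G.degree v), ((G.degree v : ℤ) - 2)
      ≤ ∑ v ∈ Finset.univ.filter (fun v => G.degree v ≠ 2), (G.degree v : ℤ) := by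
  classical
  have hdpos : ∀ v, 0 < G.degree v := degree_pos_of_connected hG hn
  set c1 := (Finset.univ.filter fun v => G.degree v = 1).card with hc1
  set c3 := (Finset.univ.filter fun v => 3 ≤ G.degree v).card with hc3
  -- split the RHS
  have hsplit := Finset.sum_filter_add_sum_filter_not
    (Finset.univ.filter fun v => G.degree v ≠ 2) (fun v => G.degree v = 1)
    (fun v => (G.degree v : ℤ))
  have hfe1 : (Finset.univ.filter fun v => G.degree v ≠ 2).filter (fun v => G.degree v = 1)
      = Finset.univ.filter fun v => G.degree v = 1 := by
    rw [Finset.filter_filter]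
    apply Finset.filter_congr
    intro v _
    constructor
    · exact fun h => h.2
    · intro h; exact ⟨by omega, h⟩
  have hfe3 : (Finset.univ.filter fun v => G.degree v ≠ 2).filter (fun v => ¬G.degree v = 1)
      = Finset.univ.filter fun v => 3 ≤ G.degree v := by
    rw [Finset.filter_filter]
    apply Finset.filter_congr
    intro v _
    have := hdpos v
    constructor
    · intro h; omega
    · intro h; omega
  rw [hfe1, hfe3] at hsplit
  have hs1 : ∑ v ∈ Finset.univ.filter (fun v => G.degree v = 1), (G.degree v : ℤ)
      = (c1 : ℤ) := by
    have hc : ∀ v ∈ Finset.univ.filter (fun v => G.degree v = 1), (G.degree v : ℤ) = 1 := by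
      intro v hv
      have h := (Finset.mem_filter.mp hv).2
      rw [h]; norm_num
    rw [Finset.sum_congr rfl hc, Finset.sum_const, nsmul_eq_mul, mul_one, hc1]
  have hs3 : ∑ v ∈ Finset.univ.filter (fun v => 3 ≤ G.degree v), ((G.degree v : ℤ) - 2)
      = (∑ v ∈ Finset.univ.filter (fun v => 3 ≤ G.degree v), (G.degree v : ℤ)) - 2 * c3 := by
    rw [Finset.sum_sub_distrib, Finset.sum_const, nsmul_eq_mul, hc3]
    ring
  -- key numeric claim
  have hkey : 2 ≤ c1 + 2 * c3 := by
    by_cases hc3pos : 0 < c3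
    · omega
    · have hc3z : (Finset.univ.filter fun v => 3 ≤ G.degree v) = ∅ := by
        rw [← Finset.card_eq_zero, ← hc3]; omega
      have hsmall : ∀ v, G.degree v ≤ 2 := by
        intro v
        by_contra hcon
        have : v ∈ Finset.univ.filter fun v => 3 ≤ G.degree v := by
          rw [Finset.mem_filter]; exact ⟨Finset.mem_univ v, by omega⟩
        rw [hc3z] at this
        exact absurd this (Finset.notMem_empty v)
      push_neg at hnot
      obtain ⟨v₀, hv₀⟩ := hnot
      have hv₀1 : G.degree v₀ = 1 := by
        have := hdpos v₀; have := hsmall v₀; omega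
      have hc1pos : 0 < c1 := by
        rw [hc1]
        apply Finset.card_pos.mpr
        exact ⟨v₀, Finset.mem_filter.mpr ⟨Finset.mem_univ v₀, hv₀1⟩⟩
      -- parity
      have hparity := G.sum_degrees_eq_twice_card_edges
      have hsp := Finset.sum_filter_add_sum_filter_not Finset.univ
        (fun v => G.degree v = 1) (fun v => G.degree v)
      have ha : ∑ v ∈ Finset.univ.filter (fun v => G.degree v = 1), G.degree v = c1 := by
        have hc : ∀ v ∈ Finset.univ.filter (fun v => G.degree v = 1), G.degree v = 1 :=
          fun v hv => (Finset.mem_filter.mp hv).2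
        rw [Finset.sum_congr rfl hc, Finset.sum_const, smul_eq_mul, mul_one, hc1]
      have hb : ∑ v ∈ Finset.univ.filter (fun v => ¬G.degree v = 1), G.degree v
          = 2 * (Finset.univ.filter fun v => ¬G.degree v = 1).card := by
        have hc : ∀ v ∈ Finset.univ.filter (fun v => ¬G.degree v = 1), G.degree v = 2 := by
          intro v hv
          have h := (Finset.mem_filter.mp hv).2
          have := hdpos v; have := hsmall v; omega
        rw [Finset.sum_congr rfl hc, Finset.sum_const, smul_eq_mul, mul_comm]
      rw [ha, hb, hparity] at hsp
      omega
  have hc3e : (c3 : ℤ) = ((Finset.univ.filter fun v => 3 ≤ G.degree v).card : ℤ) := by rw [hc3]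
  rw [hs3, ← hsplit, hs1]
  have : (2 : ℤ) ≤ (c1 : ℤ) + 2 * (c3 : ℤ) := by exact_mod_cast hkey
  linarith

/-- Every connected finite graph with `b > 0` branches has max leaf number at
most `2 * b`. -/
theorem maxLeaf_upper_bound_by_branches (V : Type) [Fintype V]
    (G : SimpleGraph V) (hG : G.Connected) (hb : 0 < branchCount G) :
    maxLeafNumber G ≤ 2 * branchCount G := by
  classical
  apply csSup_le'
  rintro k ⟨T, hle, hT, rfl⟩
  by_cases hn : 2 ≤ Fintype.card V
  · by_cases hall : ∀ v, G.degree v = 2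
    · have htree := leafCount_tree_le hle hT hn
      have hempty : (Finset.univ.filter fun v => 3 ≤ G.degree v) = ∅ := by
        apply Finset.filter_eq_empty_iff.mpr
        intro v _
        rw [hall v]
        omega
      rw [hempty, Finset.sum_empty] at htree
      have h2 : leafCount T ≤ 2 := by
        have h2' : (leafCount T : ℤ) ≤ 2 := by linarith
        exact_mod_cast h2'
      omega
    · have htree := leafCount_tree_le hle hT hn
      have hglue := glue_ineq hG hn hall
      have hbr := degree_sum_le_twice_branchCount G
      have hbr' : (∑ v ∈ Finset.univ.filter (fun v => G.degree v ≠ 2), (G.degree v : ℤ))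
          ≤ 2 * (branchCount G : ℤ) := by
        have h := (Nat.cast_le (α := ℤ)).mpr hbr
        push_cast at h
        exact h
      have hfin : (leafCount T : ℤ) ≤ 2 * (branchCount G : ℤ) := by linarith
      exact_mod_cast hfin
  · have h0 : leafCount T = 0 := by
      rw [leafCount_eq_card, Finset.card_eq_zero]
      apply Finset.filter_eq_empty_iff.mpr
      intro v _
      have := T.degree_lt_card_verts v
      omega
    omega
end

section
/- Let G be a connected finite graph, let B be a branch of G, and let s be any vertex of G. Then the vertex sequence of B may be partitioned into at most three contiguous subpaths, on each of which the shortest-path distance from s in G is monotonic (non-decreasing or non-increasing along the subpath). -/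
open SimpleGraph

variable {V : Type*}

section MyAux

variable {V : Type*} {G : SimpleGraph V}

private lemma my_support_getElem_eq_getVert {u v : V} (W : G.Walk u v) :
    ∀ k (h : k < W.support.length), W.support[k] = W.getVert k := by
  induction W with
  | nil =>
    intro k h
    simp only [SimpleGraph.Walk.support_nil, List.length_singleton] at h
    interval_cases k
    simp [SimpleGraph.Walk.getVert_zero]
  | cons h p ih =>
    intro k hk
    cases k with
    | zero => simp [SimpleGraph.Walk.support_cons, SimpleGraph.Walk.getVert_zero]
    | succ k =>
      have hk' : k < p.support.length := by
        simpa [SimpleGraph.Walk.support_cons] using hk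
      simpa [SimpleGraph.Walk.support_cons, SimpleGraph.Walk.getVert_cons_succ] using ih k hk'

private lemma my_exists_adj_dist (hG : G.Connected) {s x : V} (hx : x ≠ s) :
    ∃ y, G.Adj x y ∧ G.dist s y + 1 ≤ G.dist s x := by
  have hpos : 0 < G.dist s x := hG.pos_dist_of_ne (Ne.symm hx)
  obtain ⟨p, hp⟩ := hG.exists_walk_length_eq_dist s x
  obtain ⟨y, hadj, q, hq⟩ := SimpleGraph.Walk.exists_eq_cons_of_ne hx p.reverse
  refine ⟨y, hadj, ?_⟩
  have h1 : G.dist y s ≤ q.length := SimpleGraph.dist_le q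
  have h2 : q.length + 1 = p.length := by
    have := congrArg SimpleGraph.Walk.length hq
    simpa [SimpleGraph.Walk.length_reverse, SimpleGraph.Walk.length_cons] using this.symm
  have h3 : G.dist s y = G.dist y s := SimpleGraph.dist_comm
  omega

private lemma my_neighborSet_eq_pair [Fintype V] {x a b : V} (hab : a ≠ b)
    (ha : G.Adj x a) (hb : G.Adj x b) (hcard : (G.neighborSet x).ncard = 2) :
    G.neighborSet x = {a, b} := by
  have hsub : ({a, b} : Set V) ⊆ G.neighborSet x := by
    rintro y (rfl | rfl)
    · exact ha
    · exact hb
  exact (Set.eq_of_subset_of_ncard_le hsub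
    (by rw [hcard, Set.ncard_pair hab]) (Set.toFinite _)).symm

private lemma my_exit_walk {u v : V} (W : G.Walk u v)
    (hnbr : ∀ k, 0 < k → k < W.length →
      G.neighborSet (W.getVert k) = {W.getVert (k-1), W.getVert (k+1)}) :
    ∀ {x z : V} (P : G.Walk x z),
      (∀ k, 0 < k → k < W.length → W.getVert k ≠ z) →
      ∀ t, 0 < t → t < W.length → x = W.getVert t →
      min (t + G.dist u z) ((W.length - t) + G.dist v z) ≤ P.length := by
  intro x z P
  induction P with
  | nil =>
    intro hz t ht htL hx
    exact absurd hx.symm (hz t ht htL)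
  | @cons x y z hadj Q ih =>
    intro hz t ht htL hx
    subst hx
    have hy : y ∈ G.neighborSet (W.getVert t) := hadj
    rw [hnbr t ht htL] at hy
    rw [SimpleGraph.Walk.length_cons]
    rcases hy with hy | hy
    · -- y = W.getVert (t-1)
      by_cases ht1 : t = 1
      · subst ht1
        have hyu : y = u := by simpa [SimpleGraph.Walk.getVert_zero] using hy
        have h1 : G.dist u z ≤ Q.length := hyu ▸ SimpleGraph.dist_le Q
        exact le_trans (min_le_left _ _) (by omega)
      · have hrec := ih hz (t-1) (by omega) (by omega) hy
        rcases le_total ((t-1) + G.dist u z) ((W.length - (t-1)) + G.dist v z)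
          with hmin | hmin
        · rw [min_eq_left hmin] at hrec
          exact le_trans (min_le_left _ _) (by omega)
        · rw [min_eq_right hmin] at hrec
          exact le_trans (min_le_right _ _) (by omega)
    · -- y = W.getVert (t+1)
      have hy' : y = W.getVert (t+1) := hy
      by_cases ht1 : t + 1 = W.length
      · have hyv : y = v := by
          rw [hy', ht1, SimpleGraph.Walk.getVert_length W]
        have h1 : G.dist v z ≤ Q.length := hyv ▸ SimpleGraph.dist_le Q
        exact le_trans (min_le_right _ _) (by omega)
      · have hrec := ih hz (t+1) (by omega) (by omega) hy'
        rcases le_total ((t+1) + G.dist u z) ((W.length - (t+1)) + G.dist v z)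
          with hmin | hmin
        · rw [min_eq_left hmin] at hrec
          exact le_trans (min_le_left _ _) (by omega)
        · rw [min_eq_right hmin] at hrec
          exact le_trans (min_le_right _ _) (by omega)

private lemma my_dist_getVert_le (hG : G.Connected) {u v : V} (W : G.Walk u v) :
    ∀ j k, j ≤ k → k ≤ W.length → G.dist (W.getVert j) (W.getVert k) ≤ k - j := by
  have key : ∀ j d, j + d ≤ W.length →
      G.dist (W.getVert j) (W.getVert (j + d)) ≤ d := by
    intro j d
    induction d with
    | zero => intro _; simp [SimpleGraph.dist_self]
    | succ d ihd =>
      intro hL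
      have h1 := ihd (by omega)
      have hadj : G.Adj (W.getVert (j+d)) (W.getVert (j+d+1)) :=
        W.adj_getVert_succ (by omega)
      have h2 : G.dist (W.getVert (j+d)) (W.getVert (j+d+1)) = 1 :=
        SimpleGraph.dist_eq_one_iff_adj.mpr hadj
      have h3 := hG.dist_triangle (u := W.getVert j) (v := W.getVert (j+d))
        (w := W.getVert (j+d+1))
      have : j + (d+1) = j + d + 1 := by omega
      rw [this]
      omega
  intro j k hjk hkL
  obtain ⟨d, rfl⟩ := Nat.exists_eq_add_of_le hjk
  have := key j d hkL
  omega

private lemma my_chain_mono {f : ℕ → ℕ} {a b : ℕ}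
    (h : ∀ k, a ≤ k → k < b → f k ≤ f (k+1)) : MonotoneOn f (Set.Icc a b) := by
  have key : ∀ x d, a ≤ x → x + d ≤ b → f x ≤ f (x + d) := by
    intro x d hax
    induction d with
    | zero => intro _; simp
    | succ d ih =>
      intro hb
      have : x + (d+1) = (x + d) + 1 := by omega
      rw [this]
      exact le_trans (ih (by omega)) (h (x+d) (by omega) (by omega))
  intro x hx y hy hxy
  obtain ⟨d, rfl⟩ := Nat.exists_eq_add_of_le hxy
  exact key x d (Set.mem_Icc.mp hx).1 (Set.mem_Icc.mp hy).2

private lemma my_chain_anti {f : ℕ → ℕ} {a b : ℕ}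
    (h : ∀ k, a ≤ k → k < b → f (k+1) ≤ f k) : AntitoneOn f (Set.Icc a b) := by
  have key : ∀ x d, a ≤ x → x + d ≤ b → f (x + d) ≤ f x := by
    intro x d hax
    induction d with
    | zero => intro _; simp
    | succ d ih =>
      intro hb
      have h1 : x + (d+1) = (x + d) + 1 := by omega
      rw [h1]
      exact le_trans (h (x+d) (by omega) (by omega)) (ih (by omega))
  intro x hx y hy hxy
  obtain ⟨d, rfl⟩ := Nat.exists_eq_add_of_le hxy
  exact key x d (Set.mem_Icc.mp hx).1 (Set.mem_Icc.mp hy).2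

private lemma my_unimodal_split (f : ℕ → ℕ) (a b : ℕ) (hab : a ≤ b)
    (H : ∀ k, a < k → k < b → 1 + f (k-1) ≤ f k ∨ 1 + f (k+1) ≤ f k) :
    ∃ m, a ≤ m ∧ m ≤ b ∧ MonotoneOn f (Set.Icc a m) ∧ AntitoneOn f (Set.Icc m b) := by
  classical
  have hex : ∃ k, b ≤ k ∨ (a ≤ k ∧ f (k+1) ≤ f k) := ⟨b, Or.inl le_rfl⟩
  set m := Nat.find hex with hm
  have hPm := Nat.find_spec hex
  have hmin : ∀ k, k < m → ¬(b ≤ k ∨ (a ≤ k ∧ f (k+1) ≤ f k)) :=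
    fun k hk => Nat.find_min hex hk
  have hmb : m ≤ b := by
    by_contra h
    exact (hmin b (by omega)) (Or.inl le_rfl)
  have ham : a ≤ m := by
    by_contra h
    rcases hPm with h1 | h1 <;> omega
  refine ⟨m, ham, hmb, ?_, ?_⟩
  · apply my_chain_mono
    intro k hak hkm
    have h1 := hmin k hkm
    push_neg at h1
    have := h1.2 hak
    omega
  · apply my_chain_anti
    intro k hmk hkb
    induction k, hmk using Nat.le_induction with
    | base =>
      rcases hPm with h1 | h1
      · omega
      · exact h1.2
    | succ k hmk ihk =>
      have h1 := ihk (by omega)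
      have h2 := H (k+1) (by omega) (by omega)
      simp only [Nat.add_sub_cancel] at h2
      omega

private lemma my_ascent_chain (f : ℕ → ℕ) (a t : ℕ)
    (H : ∀ k, a < k → k < t → 1 + f (k-1) ≤ f k ∨ 1 + f (k+1) ≤ f k) :
    ∀ d c, a ≤ c → c < t → f c < f (c+1) → c = a + d → f a + (c - a) ≤ f c := by
  intro d
  induction d with
  | zero =>
    intro c _ _ _ hc
    obtain rfl : c = a := by omega
    omega
  | succ d ih =>
    intro c hac hct hasc hc
    have h1 := H c (by omega) hct
    have h2 : f (c-1) + 1 ≤ f c := by omega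
    have h3 : f (c-1) < f ((c-1)+1) := by
      have : c - 1 + 1 = c := by omega
      rw [this]; omega
    have h4 := ih (c-1) (by omega) (by omega) h3 (by omega)
    omega

private lemma my_desc_chain (f : ℕ → ℕ) (t b : ℕ)
    (H : ∀ k, t < k → k < b → 1 + f (k-1) ≤ f k ∨ 1 + f (k+1) ≤ f k)
    (c : ℕ) (htc : t ≤ c) (hdesc : f (c+1) < f c) :
    ∀ k, c ≤ k → k < b → f (k+1) + (k + 1 - c) ≤ f c ∧ f (k+1) < f k := by
  intro k hck
  induction k, hck using Nat.le_induction with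
  | base => intro _; omega
  | succ k hck ihk =>
    intro hb
    have hprev := ihk (by omega)
    have h1 := H (k+1) (by omega) (by omega)
    simp only [Nat.add_sub_cancel, show k+1+1 = k+2 from rfl] at h1
    show f (k+2) + (k + 2 - c) ≤ f c ∧ f (k+2) < f (k+1)
    omega

private lemma my_monoOn_congr {f g : ℕ → ℕ} {S : Set ℕ}
    (h : MonotoneOn f S) (he : ∀ x ∈ S, g x = f x) : MonotoneOn g S :=
  fun x hx y hy hxy => by rw [he x hx, he y hy]; exact h hx hy hxy

private lemma my_antiOn_congr {f g : ℕ → ℕ} {S : Set ℕ}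
    (h : AntitoneOn f S) (he : ∀ x ∈ S, g x = f x) : AntitoneOn g S :=
  fun x hx y hy hxy => by rw [he x hx, he y hy]; exact h hx hy hxy

end MyAux



/-- Along any branch `B` of a connected finite graph `G`, the vertex sequence of
`B` can be partitioned into at most three contiguous subpaths on each of which
the shortest-path distance from any fixed vertex `s` is monotonic. -/
theorem branch_distance_monotone_pieces (V : Type) [Fintype V]
    (G : SimpleGraph V) (hG : G.Connected) (u v : V) (W : G.Walk u v)
    (hW : IsBranch G W) (s : V) :
    ∃ i j : ℕ, i ≤ j ∧ j ≤ W.length ∧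
      (MonotoneOn (fun k => G.dist s (W.support.getD k u)) (Set.Icc 0 i) ∨
        AntitoneOn (fun k => G.dist s (W.support.getD k u)) (Set.Icc 0 i)) ∧
      (MonotoneOn (fun k => G.dist s (W.support.getD k u)) (Set.Icc i j) ∨
        AntitoneOn (fun k => G.dist s (W.support.getD k u)) (Set.Icc i j)) ∧
      (MonotoneOn (fun k => G.dist s (W.support.getD k u)) (Set.Icc j W.length) ∨
        AntitoneOn (fun k => G.dist s (W.support.getD k u)) (Set.Icc j W.length)) := by
  classical
  obtain ⟨⟨hpc, hdeg⟩, -⟩ := hW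
  have hgf : ∀ x : ℕ, x ≤ W.length →
      G.dist s (W.support.getD x u) = G.dist s (W.getVert x) := by
    intro x hx
    have hlt : x < W.support.length := by
      rw [SimpleGraph.Walk.length_support]; omega
    rw [List.getD_eq_getElem _ _ hlt, my_support_getElem_eq_getVert W x hlt]
  have mono_conv : ∀ a b : ℕ, b ≤ W.length →
      MonotoneOn (fun k => G.dist s (W.getVert k)) (Set.Icc a b) →
      MonotoneOn (fun k => G.dist s (W.support.getD k u)) (Set.Icc a b) := by
    intro a b hbL h
    apply my_monoOn_congr h
    intro x hx
    exact hgf x (le_trans (Set.mem_Icc.mp hx).2 hbL)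
  have anti_conv : ∀ a b : ℕ, b ≤ W.length →
      AntitoneOn (fun k => G.dist s (W.getVert k)) (Set.Icc a b) →
      AntitoneOn (fun k => G.dist s (W.support.getD k u)) (Set.Icc a b) := by
    intro a b hbL h
    apply my_antiOn_congr h
    intro x hx
    exact hgf x (le_trans (Set.mem_Icc.mp hx).2 hbL)
  have hinj : ∀ j k : ℕ, j ≤ W.length → k ≤ W.length → W.getVert j = W.getVert k →
      j = k ∨ (3 ≤ W.length ∧ ((j = 0 ∧ k = W.length) ∨ (j = W.length ∧ k = 0))) := by
    rcases hpc with hp | ⟨hvu, hc⟩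
    · intro j k hj hk he
      left
      have hjl : j < W.support.length := by rw [SimpleGraph.Walk.length_support]; omega
      have hkl : k < W.support.length := by rw [SimpleGraph.Walk.length_support]; omega
      have he2 : W.support[j] = W.support[k] := by
        rw [my_support_getElem_eq_getVert W j hjl, my_support_getElem_eq_getVert W k hkl]
        exact he
      exact (List.Nodup.getElem_inj_iff hp.support_nodup).mp he2
    · have htail : W.support.tail.Nodup := by
        have h1 := hc.support_nodup
        simpa using h1
      have hL3 : 3 ≤ W.length := by
        have h1 := hc.three_le_length
        simpa using h1
      have htlen : W.support.tail.length = W.length := by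
        simp [List.length_tail, SimpleGraph.Walk.length_support]
      have hgt : ∀ i : ℕ, i < W.length →
          ∀ (hfin : i < W.support.tail.length),
          W.support.tail.get ⟨i, hfin⟩ = W.getVert (i+1) := by
        intro i hi hfin
        have h' : i + 1 < W.support.length := by
          rw [SimpleGraph.Walk.length_support]; omega
        rw [List.get_tail W.support i hfin h', List.get_eq_getElem,
          my_support_getElem_eq_getVert W (i+1) h']
      have huL : W.getVert 0 = W.getVert W.length := by
        rw [SimpleGraph.Walk.getVert_zero, SimpleGraph.Walk.getVert_length]
        exact hvu.symm
      have key : ∀ j k : ℕ, 0 < j → j ≤ W.length → 0 < k → k ≤ W.length →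
          W.getVert j = W.getVert k → j = k := by
        intro j k hj0 hjL hk0 hkL he
        have e1 := hgt (j-1) (by omega) (by omega)
        have e2 := hgt (k-1) (by omega) (by omega)
        have ej : j - 1 + 1 = j := by omega
        have ek : k - 1 + 1 = k := by omega
        rw [ej] at e1
        rw [ek] at e2
        have heq := htail.get_inj_iff.mp (e1.trans (he.trans e2.symm))
        have hv : j - 1 = k - 1 := congrArg Fin.val heq
        omega
      intro j k hj hk he
      rcases Nat.eq_zero_or_pos j with hj0 | hj0 <;>
        rcases Nat.eq_zero_or_pos k with hk0 | hk0
      · left; omega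
      · subst hj0
        by_cases hkL : k = W.length
        · right; exact ⟨hL3, Or.inl ⟨rfl, hkL⟩⟩
        · exfalso
          have hx : W.getVert k = W.getVert W.length := by rw [← he]; exact huL
          exact hkL (key k W.length hk0 hk (by omega) le_rfl hx)
      · subst hk0
        by_cases hjL : j = W.length
        · right; exact ⟨hL3, Or.inr ⟨hjL, rfl⟩⟩
        · exfalso
          have hx : W.getVert j = W.getVert W.length := by rw [he]; exact huL
          exact hjL (key j W.length hj0 hj (by omega) le_rfl hx)
      · left; exact key j k hj0 hj hk0 hk he
  have hne_end : ∀ k, 0 < k → k < W.length → W.getVert k ≠ u ∧ W.getVert k ≠ v := by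
    intro k h1 h2
    constructor
    · intro he
      have hx : W.getVert k = W.getVert 0 := by
        rw [he, SimpleGraph.Walk.getVert_zero]
      have := hinj k 0 (by omega) (by omega) hx
      rcases this with h | ⟨_, h | h⟩ <;> omega
    · intro he
      have hx : W.getVert k = W.getVert W.length := by
        rw [he, SimpleGraph.Walk.getVert_length]
      have := hinj k W.length (by omega) le_rfl hx
      rcases this with h | ⟨_, h | h⟩ <;> omega
  have hnd : ∀ k, 0 < k → k < W.length → W.getVert (k-1) ≠ W.getVert (k+1) := by
    intro k h1 h2 he
    have := hinj (k-1) (k+1) (by omega) (by omega) he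
    rcases this with h | ⟨h3, h | h⟩ <;> omega
  have hnbr : ∀ k, 0 < k → k < W.length →
      G.neighborSet (W.getVert k) = {W.getVert (k-1), W.getVert (k+1)} := by
    intro k h1 h2
    have hadj1 : G.Adj (W.getVert k) (W.getVert (k+1)) := W.adj_getVert_succ h2
    have hadj0 : G.Adj (W.getVert k) (W.getVert (k-1)) := by
      have h := W.adj_getVert_succ (i := k-1) (by omega)
      have e : k - 1 + 1 = k := by omega
      rw [e] at h
      exact h.symm
    have hmem : W.getVert k ∈ W.support :=
      SimpleGraph.Walk.mem_support_iff_exists_getVert.mpr ⟨k, rfl, by omega⟩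
    exact my_neighborSet_eq_pair (hnd k h1 h2) hadj0 hadj1
      (hdeg _ hmem (hne_end k h1 h2).1 (hne_end k h1 h2).2)
  have hH : ∀ k, 0 < k → k < W.length → W.getVert k ≠ s →
      (1 + G.dist s (W.getVert (k-1)) ≤ G.dist s (W.getVert k) ∨
       1 + G.dist s (W.getVert (k+1)) ≤ G.dist s (W.getVert k)) := by
    intro k h1 h2 hks
    obtain ⟨y, hadj, hle⟩ := my_exists_adj_dist hG hks
    have hy : y ∈ G.neighborSet (W.getVert k) := hadj
    rw [hnbr k h1 h2] at hy
    rcases hy with hy | hy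
    · left; rw [hy] at hle; omega
    · right
      have hy' : y = W.getVert (k+1) := hy
      rw [hy'] at hle; omega
  by_cases hs : ∃ t, 0 < t ∧ t < W.length ∧ W.getVert t = s
  · obtain ⟨t, ht0, htL, hts⟩ := hs
    have hne_t : ∀ k, 0 < k → k < W.length → k ≠ t → W.getVert k ≠ s := by
      intro k h1 h2 hkt he
      have := hinj k t (by omega) (by omega) (he.trans hts.symm)
      rcases this with h | ⟨_, h | h⟩ <;> omega
    have H1 : ∀ k, 0 < k → k < t →
        (1 + G.dist s (W.getVert (k-1)) ≤ G.dist s (W.getVert k) ∨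
         1 + G.dist s (W.getVert (k+1)) ≤ G.dist s (W.getVert k)) :=
      fun k h1 h2 => hH k h1 (by omega) (hne_t k h1 (by omega) (by omega))
    have H2 : ∀ k, t < k → k < W.length →
        (1 + G.dist s (W.getVert (k-1)) ≤ G.dist s (W.getVert k) ∨
         1 + G.dist s (W.getVert (k+1)) ≤ G.dist s (W.getVert k)) :=
      fun k h1 h2 => hH k (by omega) h2 (hne_t k (by omega) h2 (by omega))
    by_cases hA : AntitoneOn (fun k => G.dist s (W.getVert k)) (Set.Icc 0 t)
    · obtain ⟨m2, hm2t, hm2L, hmono, hanti⟩ :=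
        my_unimodal_split (fun k => G.dist s (W.getVert k)) t W.length (by omega) H2
      exact ⟨t, m2, hm2t, hm2L, Or.inr (anti_conv 0 t (by omega) hA),
        Or.inl (mono_conv t m2 hm2L hmono), Or.inr (anti_conv m2 W.length le_rfl hanti)⟩
    · by_cases hB : MonotoneOn (fun k => G.dist s (W.getVert k)) (Set.Icc t W.length)
      · obtain ⟨m1, hm10, hm1t, hmono, hanti⟩ :=
          my_unimodal_split (fun k => G.dist s (W.getVert k)) 0 t (by omega) H1
        exact ⟨m1, t, hm1t, by omega, Or.inl (mono_conv 0 m1 (by omega) hmono),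
          Or.inr (anti_conv m1 t (by omega) hanti),
          Or.inl (mono_conv t W.length le_rfl hB)⟩
      · exfalso
        have hasc : ∃ c, c < t ∧
            G.dist s (W.getVert c) < G.dist s (W.getVert (c+1)) := by
          by_contra hno
          push_neg at hno
          exact hA (my_chain_anti (fun k _ hkt => hno k hkt))
        obtain ⟨c', hc't, hc'asc⟩ := hasc
        have hdesc : ∃ c, t ≤ c ∧ c < W.length ∧
            G.dist s (W.getVert (c+1)) < G.dist s (W.getVert c) := by
          by_contra hno
          push_neg at hno
          exact hB (my_chain_mono (fun k hk1 hk2 => hno k hk1 hk2))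
        obtain ⟨c, htc, hcL, hcdesc⟩ := hdesc
        have hA1 := my_ascent_chain (fun k => G.dist s (W.getVert k)) 0 t H1 c' c'
          (by omega) hc't hc'asc (by omega)
        have hD1 := (my_desc_chain (fun k => G.dist s (W.getVert k)) t W.length H2 c htc
          hcdesc (W.length - 1) (by omega) (by omega)).1
        have eL : W.length - 1 + 1 = W.length := by omega
        rw [eL] at hD1
        have hT1 : G.dist s (W.getVert (c'+1)) ≤ t - (c'+1) := by
          have h := my_dist_getVert_le hG W (c'+1) t (by omega) (by omega)
          rw [hts] at h
          rw [SimpleGraph.dist_comm] at h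
          exact h
        have hT2 : G.dist s (W.getVert c) ≤ c - t := by
          have h := my_dist_getVert_le hG W t c htc (by omega)
          rw [hts] at h
          exact h
        have hf0 : W.getVert 0 = u := SimpleGraph.Walk.getVert_zero W
        have hfL : W.getVert W.length = v := SimpleGraph.Walk.getVert_length W
        have hE1 : t ≤ G.dist s u ∨ (W.length - t) + G.dist v u ≤ G.dist s u := by
          obtain ⟨p, hp⟩ := hG.exists_walk_length_eq_dist s u
          have hmin := my_exit_walk W hnbr p (fun k h1 h2 => (hne_end k h1 h2).1)
            t ht0 htL hts.symm
          rw [hp] at hmin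
          rcases le_total (t + G.dist u u) ((W.length - t) + G.dist v u) with h | h
          · left
            rw [min_eq_left h] at hmin
            have hd : G.dist u u = 0 := SimpleGraph.dist_self
            omega
          · right
            rw [min_eq_right h] at hmin
            exact hmin
        have hE2 : t + G.dist u v ≤ G.dist s v ∨ W.length - t ≤ G.dist s v := by
          obtain ⟨p, hp⟩ := hG.exists_walk_length_eq_dist s v
          have hmin := my_exit_walk W hnbr p (fun k h1 h2 => (hne_end k h1 h2).2)
            t ht0 htL hts.symm
          rw [hp] at hmin
          rcases le_total (t + G.dist u v) ((W.length - t) + G.dist v v) with h | h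
          · left; rw [min_eq_left h] at hmin; exact hmin
          · right
            rw [min_eq_right h] at hmin
            have hd : G.dist v v = 0 := SimpleGraph.dist_self
            omega
        rw [hf0] at hA1
        rw [hfL] at hD1
        omega
  · push_neg at hs
    obtain ⟨m, hm0, hmL, hmono, hanti⟩ :=
      my_unimodal_split (fun k => G.dist s (W.getVert k)) 0 W.length (Nat.zero_le _)
        (fun k h1 h2 => hH k h1 h2 (hs k h1 h2))
    exact ⟨m, m, le_rfl, hmL,
      Or.inl (mono_conv 0 m hmL hmono),
      Or.inl (mono_conv m m hmL (hmono.mono (Set.Icc_subset_Icc_left hm0))),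
      Or.inr (anti_conv m W.length le_rfl hanti)⟩
end

section
/- Let G be a connected finite graph, let B be a branch of G, and let s be any vertex of G. Then for every nonnegative integer d, at most three vertices of B are at shortest-path distance exactly d from s in G. -/
open SimpleGraph

variable {V : Type*}

section BranchAux

open SimpleGraph Walk

variable {G : SimpleGraph V}

lemma branchAux_dist_succ (hG : G.Connected) {a b : V} (h : G.Adj a b) (s : V) :
    G.dist s b ≤ G.dist s a + 1 := by
  have h1 : G.dist a b ≤ 1 := by
    simpa using SimpleGraph.dist_le (Walk.cons h Walk.nil)
  have h2 := hG.dist_triangle (u := s) (v := a) (w := b)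
  omega

lemma branchAux_exists_pred (hG : G.Connected) {s x : V} (h : 0 < G.dist s x) :
    ∃ y, G.Adj x y ∧ G.dist s y + 1 = G.dist s x := by
  have hne : x ≠ s := by rintro rfl; simp [SimpleGraph.dist_self] at h
  obtain ⟨p, hp⟩ := hG.exists_walk_length_eq_dist s x
  have hq : (p.reverse).length = G.dist s x := by simpa using hp
  obtain ⟨y, hadj, q, hq'⟩ := Walk.exists_eq_cons_of_ne hne p.reverse
  have hlen : q.length + 1 = G.dist s x := by
    rw [hq'] at hq; simpa using hq
  have h1 : G.dist s y ≤ q.length := by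
    have := SimpleGraph.dist_le q.reverse
    simpa [SimpleGraph.dist_comm] using this
  have h2 : G.dist s x ≤ G.dist s y + 1 := branchAux_dist_succ hG hadj.symm s
  exact ⟨y, hadj, by omega⟩

lemma branchAux_getVert_mem {u v : V} (W : G.Walk u v) (i : ℕ) :
    W.getVert i ∈ W.support := by
  rcases le_or_gt i W.length with h | h
  · exact Walk.mem_support_iff_exists_getVert.mpr ⟨i, rfl, h⟩
  · rw [W.getVert_of_length_le h.le]
    exact W.end_mem_support

lemma branchAux_lip (hG : G.Connected) {u v : V} (W : G.Walk u v) (s : V) (i k : ℕ) :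
    G.dist s (W.getVert (i + k)) ≤ G.dist s (W.getVert i) + k ∧
    G.dist s (W.getVert i) ≤ G.dist s (W.getVert (i + k)) + k := by
  induction k with
  | zero => simp
  | succ k ih =>
    rw [show i + (k + 1) = (i + k) + 1 from rfl]
    by_cases hik : i + k < W.length
    · have hadj := W.adj_getVert_succ hik
      have h1 := branchAux_dist_succ hG hadj s
      have h2 := branchAux_dist_succ hG hadj.symm s
      omega
    · have he : W.getVert (i + k + 1) = W.getVert (i + k) := by
        rw [W.getVert_of_length_le (by omega), W.getVert_of_length_le (by omega)]
      rw [he]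
      omega

lemma branchAux_path_inj : ∀ {u v : V} (W : G.Walk u v), W.IsPath →
    ∀ i j, i ≤ W.length → j ≤ W.length → W.getVert i = W.getVert j → i = j := by
  intro u v W
  induction W with
  | nil => intro _ i j hi hj _; simp only [Walk.length_nil] at hi hj; omega
  | @cons a b c h p ih =>
    intro hW i j hi hj hij
    rw [Walk.cons_isPath_iff] at hW
    rcases i with _ | i <;> rcases j with _ | j
    · rfl
    · exfalso
      rw [Walk.getVert_zero, Walk.getVert_cons_succ] at hij
      exact hW.2 (by rw [hij]; exact branchAux_getVert_mem p j)
    · exfalso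
      rw [Walk.getVert_zero, Walk.getVert_cons_succ] at hij
      exact hW.2 (by rw [← hij]; exact branchAux_getVert_mem p i)
    · rw [Walk.length_cons] at hi hj
      rw [Walk.getVert_cons_succ, Walk.getVert_cons_succ] at hij
      have := ih hW.1 i j (by omega) (by omega) hij
      omega

lemma branchAux_cycle_facts {u : V} {W : G.Walk u u} (hW : W.IsCycle) :
    (∀ i j, 0 < i → i ≤ W.length → 0 < j → j ≤ W.length →
      W.getVert i = W.getVert j → i = j) ∧
    (∀ i, 0 < i → i < W.length → W.getVert i ≠ u) := by
  cases W with
  | nil => exact absurd rfl hW.ne_nil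
  | @cons a b c h p =>
    have hp : p.IsPath := by
      refine Walk.IsPath.mk' ?_
      have := hW.support_nodup
      rwa [Walk.support_cons, List.tail_cons] at this
    have key : ∀ i j, 0 < i → i ≤ (Walk.cons h p).length → 0 < j →
        j ≤ (Walk.cons h p).length → (Walk.cons h p).getVert i = (Walk.cons h p).getVert j →
        i = j := by
      intro i j hi hil hj hjl hij
      rcases i with _ | i
      · omega
      rcases j with _ | j
      · omega
      rw [Walk.getVert_cons_succ, Walk.getVert_cons_succ] at hij
      rw [Walk.length_cons] at hil hjl
      have := branchAux_path_inj p hp i j (by omega) (by omega) hij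
      omega
    refine ⟨key, ?_⟩
    intro i hi hil hiu
    have hlen : (Walk.cons h p).getVert (Walk.cons h p).length = u := Walk.getVert_length _
    have := key i (Walk.cons h p).length hi (le_of_lt hil) (by simp [Walk.length_cons]) le_rfl
      (by rw [hiu, hlen])
    omega

lemma branchAux_nbr [Fintype V] {u v : V} {W : G.Walk u v}
    (hdeg : ∀ x ∈ W.support, x ≠ u → x ≠ v → (G.neighborSet x).ncard = 2)
    (hneu : ∀ i, 0 < i → i < W.length → W.getVert i ≠ u)
    (hnev : ∀ i, 0 < i → i < W.length → W.getVert i ≠ v)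
    (hcorner : ∀ j, 0 < j → j < W.length → W.getVert (j - 1) ≠ W.getVert (j + 1)) :
    ∀ j c, 0 < j → j < W.length → G.Adj (W.getVert j) c →
      c = W.getVert (j - 1) ∨ c = W.getVert (j + 1) := by
  intro j c hj hjn hadj
  have hcard := hdeg _ (branchAux_getVert_mem W j) (hneu j hj hjn) (hnev j hj hjn)
  have hadj1 : G.Adj (W.getVert j) (W.getVert (j + 1)) := W.adj_getVert_succ hjn
  have hadj0 : G.Adj (W.getVert j) (W.getVert (j - 1)) := by
    have h := W.adj_getVert_succ (show j - 1 < W.length by omega)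
    rw [show j - 1 + 1 = j by omega] at h
    exact h.symm
  have hsub : ({W.getVert (j - 1), W.getVert (j + 1)} : Set V) ⊆ G.neighborSet (W.getVert j) := by
    rintro y (rfl | rfl)
    · exact hadj0
    · exact hadj1
  have hpair : ({W.getVert (j - 1), W.getVert (j + 1)} : Set V).ncard = 2 :=
    Set.ncard_pair (hcorner j hj hjn)
  have heq := Set.eq_of_subset_of_ncard_le hsub (by rw [hcard, hpair]) (Set.toFinite _)
  have hc : c ∈ ({W.getVert (j - 1), W.getVert (j + 1)} : Set V) := by
    rw [heq]; exact hadj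
  simpa using hc

lemma branchAux_exit (x : ℕ → V) (n : ℕ)
    (hnbr : ∀ j c, 0 < j → j < n → G.Adj (x j) c → c = x (j - 1) ∨ c = x (j + 1))
    (hne : ∀ j, 0 < j → j < n → x j ≠ x 0) :
    ∀ (a b : V) (Q : G.Walk a b), b = x 0 → ∀ j, 0 < j → j < n → a = x j →
      min j ((n - j) + G.dist (x n) (x 0)) ≤ Q.length := by
  intro a b Q
  induction Q with
  | nil =>
    intro hb j hj hjn ha
    exact absurd (ha.symm.trans hb) (hne j hj hjn)
  | @cons p q r h P ih =>
    intro hb j hj hjn ha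
    rcases hnbr j q hj hjn (ha ▸ h) with hc | hc
    · by_cases hj1 : j = 1
      · subst hj1
        rw [Walk.length_cons]
        omega
      · have := ih hb (j - 1) (by omega) (by omega) hc
        rw [Walk.length_cons]
        omega
    · by_cases hjn1 : j + 1 = n
      · have hd : G.dist (x n) (x 0) ≤ P.length := by
          rw [hjn1] at hc
          rw [← hc, ← hb]
          exact SimpleGraph.dist_le P
        rw [Walk.length_cons]
        omega
      · have := ih hb (j + 1) (by omega) (by omega) hc
        rw [Walk.length_cons]
        omega

lemma branchAux_run (g : ℕ → ℕ) (d C : ℕ) (h0 : g 0 = d) (h1 : g 1 + 1 = d)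
    (hM : ∀ k, 1 ≤ k → k + 1 ≤ C → 0 < g k → g k = g (k - 1) + 1 ∨ g k = g (k + 1) + 1)
    (hCd : C ≤ d) : ∀ k, k ≤ C → g k + k = d := by
  have key : ∀ k, k + 1 ≤ C → g k + k = d ∧ g (k + 1) + (k + 1) = d := by
    intro k
    induction k with
    | zero => intro hk; exact ⟨by omega, by simpa using h1⟩
    | succ k ih =>
      intro hk
      have ih' := ih (by omega)
      have hpos : 0 < g (k + 1) := by omega
      refine ⟨ih'.2, ?_⟩
      rcases hM (k + 1) (by omega) (by omega) hpos with h | h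
      · rw [Nat.add_sub_cancel] at h
        omega
      · omega
  intro k hk
  rcases k with _ | j
  · omega
  · exact (key j (by omega)).2

lemma branchAux_low (f : ℕ → ℕ) (n d a b : ℕ) (hab : a < b) (hbn : b ≤ n)
    (hfa : f a = d) (hfb : f b = d)
    (hM : ∀ i, 0 < i → i < n → 0 < f i → f i = f (i - 1) + 1 ∨ f i = f (i + 1) + 1)
    (t : ℕ) (hat : a < t) (htb : t < b) (hft : f t < d) :
    ∃ m, a < m ∧ m < b ∧ f m = 0 := by
  have hne : (Finset.Ico (a + 1) b).Nonempty := ⟨t, by simp only [Finset.mem_Ico]; omega⟩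
  obtain ⟨t0, ht0mem, ht0min⟩ := Finset.exists_min_image (Finset.Ico (a + 1) b) f hne
  simp only [Finset.mem_Ico] at ht0mem
  have hle := ht0min t (by simp only [Finset.mem_Ico]; omega)
  refine ⟨t0, by omega, by omega, ?_⟩
  by_contra h0
  rcases hM t0 (by omega) (by omega) (by omega) with h | h
  · rcases eq_or_lt_of_le (show a ≤ t0 - 1 by omega) with he | hlt
    · rw [← he] at h; omega
    · have := ht0min (t0 - 1) (by simp only [Finset.mem_Ico]; omega); omega
  · rcases eq_or_lt_of_le (show t0 + 1 ≤ b by omega) with he | hlt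
    · rw [he] at h; omega
    · have := ht0min (t0 + 1) (by simp only [Finset.mem_Ico]; omega); omega

lemma branchAux_structure (f : ℕ → ℕ) (n d : ℕ) (hd : 0 < d)
    (i1 i2 i3 i4 : ℕ) (h12 : i1 < i2) (h23 : i2 < i3) (h34 : i3 < i4) (h4n : i4 ≤ n)
    (hf1 : f i1 = d) (hf2 : f i2 = d) (hf3 : f i3 = d) (hf4 : f i4 = d)
    (hM : ∀ i, 0 < i → i < n → 0 < f i → f i = f (i - 1) + 1 ∨ f i = f (i + 1) + 1)
    (hlipA : ∀ i k, f i ≤ f (i + k) + k) (hlipB : ∀ i k, f (i + k) ≤ f i + k)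
    (hzero : ∀ i j, 0 < i → i < n → 0 < j → j < n → f i = 0 → f j = 0 → i = j) :
    ∃ m, 0 < m ∧ m < n ∧ f m = 0 ∧ f 0 < m ∧ f n + m < n := by
  have getzero12 : (∃ t, i1 < t ∧ t < i2 ∧ f t < d) → ∃ m, i1 < m ∧ m < i2 ∧ f m = 0 := by
    rintro ⟨t, h1, h2, h3⟩
    exact branchAux_low f n d i1 i2 h12 (by omega) hf1 hf2 hM t h1 h2 h3
  have getzero23 : (∃ t, i2 < t ∧ t < i3 ∧ f t < d) → ∃ m, i2 < m ∧ m < i3 ∧ f m = 0 := by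
    rintro ⟨t, h1, h2, h3⟩
    exact branchAux_low f n d i2 i3 h23 (by omega) hf2 hf3 hM t h1 h2 h3
  have getzero34 : (∃ t, i3 < t ∧ t < i4 ∧ f t < d) → ∃ m, i3 < m ∧ m < i4 ∧ f m = 0 := by
    rintro ⟨t, h1, h2, h3⟩
    exact branchAux_low f n d i3 i4 h34 (by omega) hf3 hf4 hM t h1 h2 h3
  have hz23 : ∃ m, i2 < m ∧ m < i3 ∧ f m = 0 := by
    rcases hM i3 (by omega) (by omega) (by omega) with h | h
    · by_cases hc : i3 - 1 = i2
      · exfalso; rw [hc] at h; omega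
      · exact getzero23 ⟨i3 - 1, by omega, by omega, by omega⟩
    · exfalso
      by_cases hc : i3 + 1 = i4
      · rw [hc] at h; omega
      · obtain ⟨m2, hm2a, hm2b, hm2z⟩ := getzero34 ⟨i3 + 1, by omega, by omega, by omega⟩
        have hz1 : ∃ m1, i1 < m1 ∧ m1 < i3 ∧ f m1 = 0 := by
          rcases hM i2 (by omega) (by omega) (by omega) with h' | h'
          · by_cases hc' : i2 - 1 = i1
            · exfalso; rw [hc'] at h'; omega
            · obtain ⟨m1, a1, b1, c1⟩ := getzero12 ⟨i2 - 1, by omega, by omega, by omega⟩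
              exact ⟨m1, by omega, by omega, c1⟩
          · by_cases hc' : i2 + 1 = i3
            · exfalso; rw [hc'] at h'; omega
            · obtain ⟨m1, a1, b1, c1⟩ := getzero23 ⟨i2 + 1, by omega, by omega, by omega⟩
              exact ⟨m1, by omega, by omega, c1⟩
        obtain ⟨m1, a1, b1, c1⟩ := hz1
        have := hzero m1 m2 (by omega) (by omega) (by omega) (by omega) c1 hm2z
        omega
  obtain ⟨m, hma, hmb, hfm⟩ := hz23
  have humesh : ∀ t, 0 < t → t < n → f t = 0 → t = m := fun t a b c =>
    hzero t m a b (by omega) (by omega) c hfm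
  have hnot12 : ∀ t, i1 < t → t < i2 → d ≤ f t := by
    intro t a b
    by_contra hlt
    push_neg at hlt
    obtain ⟨m1, x1, x2, x3⟩ := getzero12 ⟨t, a, b, hlt⟩
    have := humesh m1 (by omega) (by omega) x3
    omega
  have hnot34 : ∀ t, i3 < t → t < i4 → d ≤ f t := by
    intro t a b
    by_contra hlt
    push_neg at hlt
    obtain ⟨m1, x1, x2, x3⟩ := getzero34 ⟨t, a, b, hlt⟩
    have := humesh m1 (by omega) (by omega) x3
    omega
  have hL1 : i2 + d ≤ m := by
    have h := hlipA i2 (m - i2)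
    rw [show i2 + (m - i2) = m by omega] at h
    omega
  have hL2 : m + d ≤ i3 := by
    have h := hlipB m (i3 - m)
    rw [show m + (i3 - m) = i3 by omega] at h
    omega
  have hA1 : f (i2 + 1) + 1 = d := by
    rcases hM i2 (by omega) (by omega) (by omega) with h | h
    · exfalso
      by_cases hc : i2 - 1 = i1
      · rw [hc] at h; omega
      · have := hnot12 (i2 - 1) (by omega) (by omega); omega
    · omega
  have hrunA : ∀ k, k ≤ d → (fun k => f (i2 + k)) k + k = d := by
    apply branchAux_run _ d d (by simpa using hf2) (by exact hA1) ?_ le_rfl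
    intro k hk1 hk2 hpos
    have h := hM (i2 + k) (by omega) (by omega) (by exact hpos)
    show f (i2 + k) = f (i2 + (k - 1)) + 1 ∨ f (i2 + k) = f (i2 + (k + 1)) + 1
    rw [show i2 + (k - 1) = i2 + k - 1 by omega, show i2 + (k + 1) = i2 + k + 1 by omega]
    exact h
  have hmA : i2 + d = m := by
    have h0 : f (i2 + d) + d = d := hrunA d le_rfl
    exact humesh (i2 + d) (by omega) (by omega) (by omega)
  have hB1 : f (i3 - 1) + 1 = d := by
    rcases hM i3 (by omega) (by omega) (by omega) with h | h
    · omega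
    · exfalso
      by_cases hc : i3 + 1 = i4
      · rw [hc] at h; omega
      · have := hnot34 (i3 + 1) (by omega) (by omega); omega
  have hrunB : ∀ k, k ≤ d → (fun k => f (i3 - k)) k + k = d := by
    apply branchAux_run _ d d (by show f (i3 - 0) = d; rw [Nat.sub_zero]; exact hf3)
      (by exact hB1) ?_ le_rfl
    intro k hk1 hk2 hpos
    have h := hM (i3 - k) (by omega) (by omega) (by exact hpos)
    show f (i3 - k) = f (i3 - (k - 1)) + 1 ∨ f (i3 - k) = f (i3 - (k + 1)) + 1
    rw [show i3 - (k - 1) = i3 - k + 1 by omega, show i3 - (k + 1) = i3 - k - 1 by omega]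
    exact h.symm
  have hmB : m + d = i3 := by
    have h0 : f (i3 - d) + d = d := hrunB d le_rfl
    have := humesh (i3 - d) (by omega) (by omega) (by omega)
    omega
  have hC : f 0 + i1 = d := by
    by_cases h10 : i1 = 0
    · rw [h10] at hf1; omega
    · have hC1 : f (i1 - 1) + 1 = d := by
        rcases hM i1 (by omega) (by omega) (by omega) with h | h
        · omega
        · exfalso
          by_cases hc : i1 + 1 = i2
          · rw [hc] at h; omega
          · have := hnot12 (i1 + 1) (by omega) (by omega); omega
      have hrunC : ∀ k, k ≤ min i1 d → (fun k => f (i1 - k)) k + k = d := by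
        apply branchAux_run _ d (min i1 d) (by show f (i1 - 0) = d; rw [Nat.sub_zero]; exact hf1)
          (by exact hC1) ?_ (min_le_right _ _)
        intro k hk1 hk2 hpos
        have h := hM (i1 - k) (by omega) (by omega) (by exact hpos)
        show f (i1 - k) = f (i1 - (k - 1)) + 1 ∨ f (i1 - k) = f (i1 - (k + 1)) + 1
        rw [show i1 - (k - 1) = i1 - k + 1 by omega, show i1 - (k + 1) = i1 - k - 1 by omega]
        exact h.symm
      by_cases hid : i1 ≤ d
      · have h0 : f (i1 - i1) + i1 = d := hrunC i1 (by omega)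
        rw [Nat.sub_self] at h0
        exact h0
      · exfalso
        have h0 : f (i1 - d) + d = d := hrunC d (by omega)
        have := humesh (i1 - d) (by omega) (by omega) (by omega)
        omega
  have hD : f n + (n - i4) = d ∧ n - i4 ≤ d := by
    by_cases h4 : i4 = n
    · rw [h4] at hf4; constructor <;> omega
    · have hD1 : f (i4 + 1) + 1 = d := by
        rcases hM i4 (by omega) (by omega) (by omega) with h | h
        · exfalso
          by_cases hc : i4 - 1 = i3
          · rw [hc] at h; omega
          · have := hnot34 (i4 - 1) (by omega) (by omega); omega
        · omega
      have hrunD : ∀ k, k ≤ min (n - i4) d → (fun k => f (i4 + k)) k + k = d := by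
        apply branchAux_run _ d (min (n - i4) d) (by simpa using hf4)
          (by exact hD1) ?_ (min_le_right _ _)
        intro k hk1 hk2 hpos
        have h := hM (i4 + k) (by omega) (by omega) (by exact hpos)
        show f (i4 + k) = f (i4 + (k - 1)) + 1 ∨ f (i4 + k) = f (i4 + (k + 1)) + 1
        rw [show i4 + (k - 1) = i4 + k - 1 by omega, show i4 + (k + 1) = i4 + k + 1 by omega]
        exact h
      by_cases hnd : n - i4 ≤ d
      · have h0 : f (i4 + (n - i4)) + (n - i4) = d := hrunD (n - i4) (by omega)
        rw [show i4 + (n - i4) = n by omega] at h0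
        exact ⟨h0, hnd⟩
      · exfalso
        have h0 : f (i4 + d) + d = d := hrunD d (by omega)
        have := humesh (i4 + d) (by omega) (by omega) (by omega)
        omega
  obtain ⟨hD1', hD2'⟩ := hD
  exact ⟨m, by omega, by omega, hfm, by omega, by omega⟩

lemma branchAux_common [Fintype V] (hG : G.Connected) {u v : V}
    (W : G.Walk u v) (s : V) (d : ℕ) (hd : 0 < d)
    (hnbr : ∀ j c, 0 < j → j < W.length → G.Adj (W.getVert j) c →
      c = W.getVert (j - 1) ∨ c = W.getVert (j + 1))
    (hii : ∀ i j, 0 < i → i < W.length → 0 < j → j < W.length →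
      W.getVert i = W.getVert j → i = j)
    (N : ℕ) (hN : N ≤ W.length + 1)
    (hcover : ∀ x ∈ W.support, G.dist s x = d → ∃ i, i < N ∧ W.getVert i = x)
    (hbig : ¬ {x : V | x ∈ W.support ∧ G.dist s x = d}.ncard ≤ 3) :
    ∃ m, 0 < m ∧ m < W.length ∧ W.getVert m = s ∧
      G.dist s u < m ∧ G.dist s v + m < W.length := by
  classical
  have hM : ∀ i, 0 < i → i < W.length → 0 < G.dist s (W.getVert i) →
      G.dist s (W.getVert i) = G.dist s (W.getVert (i - 1)) + 1 ∨
      G.dist s (W.getVert i) = G.dist s (W.getVert (i + 1)) + 1 := by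
    intro i h1 h2 hpos
    obtain ⟨y, hady, hdy⟩ := branchAux_exists_pred hG hpos
    rcases hnbr i y h1 h2 hady with rfl | rfl
    · left; omega
    · right; omega
  have hzero : ∀ i j, 0 < i → i < W.length → 0 < j → j < W.length →
      G.dist s (W.getVert i) = 0 → G.dist s (W.getVert j) = 0 → i = j := by
    intro i j hi1 hi2 hj1 hj2 hfi hfj
    exact hii i j hi1 hi2 hj1 hj2
      ((hG.dist_eq_zero_iff.mp hfi).symm.trans (hG.dist_eq_zero_iff.mp hfj))
  set T := (Finset.range N).filter (fun i => G.dist s (W.getVert i) = d) with hT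
  have hT4 : 4 ≤ T.card := by
    by_contra hc
    push_neg at hc
    apply hbig
    have hsub : {x : V | x ∈ W.support ∧ G.dist s x = d} ⊆
        ↑(T.image (fun i => W.getVert i)) := by
      rintro x ⟨hx1, hx2⟩
      obtain ⟨i, hiN, rfl⟩ := hcover x hx1 hx2
      exact Finset.mem_coe.mpr (Finset.mem_image.mpr
        ⟨i, Finset.mem_filter.mpr ⟨Finset.mem_range.mpr hiN, hx2⟩, rfl⟩)
    have h1 := Set.ncard_le_ncard hsub (Finset.finite_toSet _)
    rw [Set.ncard_coe_finset] at h1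
    have h2 := Finset.card_image_le (s := T) (f := fun i => W.getVert i)
    omega
  obtain ⟨T4, hT4sub, hT4card⟩ := T.exists_subset_card_eq hT4
  have hmem : ∀ i : Fin 4, (T4.orderEmbOfFin hT4card i) < N ∧
      G.dist s (W.getVert (T4.orderEmbOfFin hT4card i)) = d := by
    intro i
    have := hT4sub (Finset.orderEmbOfFin_mem T4 hT4card i)
    rw [hT, Finset.mem_filter, Finset.mem_range] at this
    exact this
  have hmono := (T4.orderEmbOfFin hT4card).strictMono
  obtain ⟨m, hm1, hm2, hm3, hm4, hm5⟩ :=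
    branchAux_structure (fun i => G.dist s (W.getVert i)) W.length d hd
      (T4.orderEmbOfFin hT4card 0) (T4.orderEmbOfFin hT4card 1)
      (T4.orderEmbOfFin hT4card 2) (T4.orderEmbOfFin hT4card 3)
      (hmono (by decide)) (hmono (by decide)) (hmono (by decide))
      (by have := (hmem 3).1; omega)
      (hmem 0).2 (hmem 1).2 (hmem 2).2 (hmem 3).2
      hM (fun i k => (branchAux_lip hG W s i k).2) (fun i k => (branchAux_lip hG W s i k).1)
      hzero
  refine ⟨m, hm1, hm2, (hG.dist_eq_zero_iff.mp hm3).symm, ?_, ?_⟩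
  · have h : G.dist s (W.getVert 0) < m := hm4
    rwa [W.getVert_zero] at h
  · have h : G.dist s (W.getVert W.length) + m < W.length := hm5
    rwa [W.getVert_length] at h

end BranchAux
/-- For any branch `B` of a connected finite graph `G`, any vertex `s`, and any
distance `d`, at most three vertices of `B` are at distance exactly `d` from `s`. -/
theorem branch_at_most_three_at_distance (V : Type) [Fintype V]
    (G : SimpleGraph V) (hG : G.Connected) (u v : V) (W : G.Walk u v)
    (hW : IsBranch G W) (s : V) (d : ℕ) :
    {x : V | x ∈ W.support ∧ G.dist s x = d}.ncard ≤ 3 := by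
  classical
  obtain ⟨⟨hpc, hdeg⟩, -⟩ := hW
  rcases Nat.eq_zero_or_pos d with rfl | hd
  · have hsub : {x : V | x ∈ W.support ∧ G.dist s x = 0} ⊆ {s} := by
      rintro x ⟨-, hx⟩
      exact Set.mem_singleton_iff.mpr (hG.dist_eq_zero_iff.mp hx).symm
    exact le_trans (Set.ncard_le_ncard hsub (Set.finite_singleton s)) (by simp)
  by_contra hbig
  rcases hpc with hpath | ⟨hvu, hcyc⟩
  · -- path case
    have pinj := branchAux_path_inj W hpath
    have hneu : ∀ i, 0 < i → i < W.length → W.getVert i ≠ u := by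
      intro i h1 h2 he
      have := pinj i 0 (by omega) (by omega) (by rw [he, Walk.getVert_zero])
      omega
    have hnev : ∀ i, 0 < i → i < W.length → W.getVert i ≠ v := by
      intro i h1 h2 he
      have := pinj i W.length (by omega) le_rfl (by rw [he, Walk.getVert_length])
      omega
    have hcorner : ∀ j, 0 < j → j < W.length → W.getVert (j - 1) ≠ W.getVert (j + 1) := by
      intro j h1 h2 he
      have := pinj (j - 1) (j + 1) (by omega) (by omega) he
      omega
    have hnbr := branchAux_nbr hdeg hneu hnev hcorner
    have hii : ∀ i j, 0 < i → i < W.length → 0 < j → j < W.length →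
        W.getVert i = W.getVert j → i = j := fun i j a b c d' e =>
      pinj i j (by omega) (by omega) e
    have hcover : ∀ x ∈ W.support, G.dist s x = d → ∃ i, i < W.length + 1 ∧ W.getVert i = x := by
      intro x hx _
      obtain ⟨i, hgi, hil⟩ := Walk.mem_support_iff_exists_getVert.mp hx
      exact ⟨i, by omega, hgi⟩
    obtain ⟨m, hm1, hm2, hm3, hm4, hm5⟩ :=
      branchAux_common hG W s d hd hnbr hii (W.length + 1) le_rfl hcover hbig
    obtain ⟨Qu, hQu⟩ := hG.exists_walk_length_eq_dist s u
    have hexu : ∀ j, 0 < j → j < W.length → W.getVert j ≠ W.getVert 0 := by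
      intro j a b
      rw [Walk.getVert_zero]
      exact hneu j a b
    have h1 := branchAux_exit W.getVert W.length hnbr hexu s u Qu
      (W.getVert_zero).symm m hm1 hm2 hm3.symm
    rw [hQu, Walk.getVert_length, Walk.getVert_zero] at h1
    -- reversed exit
    have hnbr' : ∀ j c, 0 < j → j < W.length →
        G.Adj ((fun k => W.getVert (W.length - k)) j) c →
        c = (fun k => W.getVert (W.length - k)) (j - 1) ∨
        c = (fun k => W.getVert (W.length - k)) (j + 1) := by
      intro j c hj1 hj2 hadj
      have h := hnbr (W.length - j) c (by omega) (by omega) hadj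
      rcases h with h | h
      · right
        show c = W.getVert (W.length - (j + 1))
        rw [show W.length - (j + 1) = W.length - j - 1 by omega]
        exact h
      · left
        show c = W.getVert (W.length - (j - 1))
        rw [show W.length - (j - 1) = W.length - j + 1 by omega]
        exact h
    have hexv : ∀ j, 0 < j → j < W.length →
        (fun k => W.getVert (W.length - k)) j ≠ (fun k => W.getVert (W.length - k)) 0 := by
      intro j a b
      show W.getVert (W.length - j) ≠ W.getVert (W.length - 0)
      rw [Nat.sub_zero, Walk.getVert_length]
      exact hnev (W.length - j) (by omega) (by omega)
    obtain ⟨Qv, hQv⟩ := hG.exists_walk_length_eq_dist s v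
    have h2 := branchAux_exit (fun k => W.getVert (W.length - k)) W.length hnbr' hexv s v Qv
      (by show v = W.getVert (W.length - 0); rw [Nat.sub_zero, Walk.getVert_length])
      (W.length - m) (by omega) (by omega)
      (by show s = W.getVert (W.length - (W.length - m))
          rw [show W.length - (W.length - m) = m by omega]
          exact hm3.symm)
    rw [hQv] at h2
    have e1 : (fun k => W.getVert (W.length - k)) W.length = u := by
      show W.getVert (W.length - W.length) = u
      rw [Nat.sub_self, Walk.getVert_zero]
    have e2 : (fun k => W.getVert (W.length - k)) 0 = v := by
      show W.getVert (W.length - 0) = v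
      rw [Nat.sub_zero, Walk.getVert_length]
    rw [show W.getVert (W.length - W.length) = u from e1,
      show W.getVert (W.length - 0) = v from e2] at h2
    have hdc : G.dist v u = G.dist u v := SimpleGraph.dist_comm
    have hDzero : G.dist u v = 0 := by omega
    have huv : u = v := hG.dist_eq_zero_iff.mp hDzero
    have := pinj 0 W.length (by omega) le_rfl
      (by rw [Walk.getVert_zero, Walk.getVert_length, huv])
    omega
  · -- cycle case
    subst hvu
    rw [Walk.copy_rfl_rfl] at hcyc
    have hn3 := hcyc.three_le_length
    obtain ⟨cinj, cne⟩ := branchAux_cycle_facts hcyc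
    have hcorner : ∀ j, 0 < j → j < W.length → W.getVert (j - 1) ≠ W.getVert (j + 1) := by
      intro j h1 h2 he
      rcases Nat.lt_or_ge j 2 with hj | hj
      · have hj1 : j = 1 := by omega
        subst hj1
        rw [show (1 : ℕ) - 1 = 0 from rfl, Walk.getVert_zero] at he
        exact cne 2 (by omega) (by omega) he.symm
      · have := cinj (j - 1) (j + 1) (by omega) (by omega) (by omega) (by omega) he
        omega
    have hnbr := branchAux_nbr hdeg cne cne hcorner
    have hii : ∀ i j, 0 < i → i < W.length → 0 < j → j < W.length →
        W.getVert i = W.getVert j → i = j := fun i j a b c d' e =>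
      cinj i j a (by omega) c (by omega) e
    have hcover : ∀ x ∈ W.support, G.dist s x = d → ∃ i, i < W.length ∧ W.getVert i = x := by
      intro x hx _
      obtain ⟨i, hgi, hil⟩ := Walk.mem_support_iff_exists_getVert.mp hx
      rcases Nat.lt_or_ge i W.length with h | h
      · exact ⟨i, h, hgi⟩
      · refine ⟨0, by omega, ?_⟩
        rw [Walk.getVert_zero, ← hgi, W.getVert_of_length_le h]
    obtain ⟨m, hm1, hm2, hm3, hm4, hm5⟩ :=
      branchAux_common hG W s d hd hnbr hii W.length (by omega) hcover hbig
    obtain ⟨Qu, hQu⟩ := hG.exists_walk_length_eq_dist s v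
    have hexu : ∀ j, 0 < j → j < W.length → W.getVert j ≠ W.getVert 0 := by
      intro j a b
      rw [Walk.getVert_zero]
      exact cne j a b
    have h1 := branchAux_exit W.getVert W.length hnbr hexu s v Qu
      (W.getVert_zero).symm m hm1 hm2 hm3.symm
    rw [hQu, Walk.getVert_length, Walk.getVert_zero, SimpleGraph.dist_self] at h1
    omega
end

section
/- There exists a constant c > 0 such that for every connected finite graph G, every two branches A and B of G (possibly A = B), and every vertex s of G, the indistinct set for s, A, and B has cardinality at most c · min(|A|, |B|), where |A| and |B| denote the numbers of vertices of A and B. -/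
open SimpleGraph

variable {V : Type*}

section Aux

lemma my_support_getElem {G : SimpleGraph V} {u v : V} (W : G.Walk u v) {i : ℕ}
    (hi : i < W.support.length) : W.support[i] = W.getVert i := by
  induction W generalizing i with
  | nil => simp at hi; subst hi; simp [SimpleGraph.Walk.getVert]
  | cons h p ih =>
    cases i with
    | zero => simp [SimpleGraph.Walk.getVert]
    | succ i =>
      simp only [SimpleGraph.Walk.support_cons, List.getElem_cons_succ,
        SimpleGraph.Walk.getVert_cons_succ]
      exact ih (by simp at hi ⊢; omega)

lemma my_three (S : Finset ℕ) (h : 2 < S.card) :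
    ∃ i1 ∈ S, ∃ i2 ∈ S, ∃ i3 ∈ S, i1 < i2 ∧ i2 < i3 := by
  have hne : S.Nonempty := by rw [← Finset.card_pos]; omega
  set i1 := S.min' hne with hi1
  set i3 := S.max' hne with hi3
  have hcard2 : ({i1, i3} : Finset ℕ).card ≤ 2 := by
    apply le_trans (Finset.card_insert_le _ _); simp
  have hsd : 0 < (S \ {i1, i3}).card := by
    have := Finset.card_le_card_sdiff_add_card (s := S) (t := {i1, i3}); omega
  obtain ⟨i2, hi2⟩ := Finset.card_pos.mp hsd
  simp only [Finset.mem_sdiff, Finset.mem_insert, Finset.mem_singleton] at hi2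
  obtain ⟨hi2S, hi2ne⟩ := hi2
  push_neg at hi2ne
  refine ⟨i1, S.min'_mem hne, i2, hi2S, i3, S.max'_mem hne, ?_, ?_⟩
  · exact lt_of_le_of_ne (S.min'_le _ hi2S) (Ne.symm hi2ne.1)
  · exact lt_of_le_of_ne (S.le_max' _ hi2S) hi2ne.2

lemma my_seg (f : ℕ → ℕ) (a b k : ℕ)
    (h : ∀ i, a < i → i < b → f (i - 1) < f i ∨ f (i + 1) < f i) :
    ((Finset.Icc a b).filter (fun i => f i = k)).card ≤ 2 := by
  by_contra hc
  push_neg at hc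
  obtain ⟨i1, h1, i2, h2, i3, h3, h12, h23⟩ := my_three _ hc
  simp only [Finset.mem_filter, Finset.mem_Icc] at h1 h2 h3
  have hdesc : ∃ j, i1 ≤ j ∧ j < i2 ∧ f (j + 1) ≤ f j := by
    by_contra hno
    push_neg at hno
    have H1 : ∀ d m, m = i1 + d → m ≤ i2 → f i1 + d ≤ f m := by
      intro d
      induction d with
      | zero => intro m hm _; subst hm; simp
      | succ d ih =>
        intro m hm hm2
        have hp := ih (m - 1) (by omega) (by omega)
        have := hno (m - 1) (by omega) (by omega)
        have e : m - 1 + 1 = m := by omega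
        rw [e] at this
        omega
    have := H1 (i2 - i1) i2 (by omega) le_rfl
    omega
  obtain ⟨j, hj1, hj2, hj3⟩ := hdesc
  have hdec : ∀ d i, i = j + 1 + d → i < b → f (i + 1) < f i := by
    intro d
    induction d with
    | zero =>
      intro i hi hib
      have e2 : i = j + 1 := by omega
      subst e2
      rcases h (j + 1) (by omega) hib with h' | h'
      · exfalso; rw [show j + 1 - 1 = j from rfl] at h'; omega
      · exact h'
    | succ d ih =>
      intro i hi hib
      have hprev := ih (i - 1) (by omega) (by omega)
      rcases h i (by omega) hib with h' | h'
      · exfalso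
        have e : i - 1 + 1 = i := by omega
        rw [e] at hprev; omega
      · exact h'
  have H2 : ∀ d m, m = i2 + d → m ≤ i3 → f m + (m - i2) ≤ f i2 := by
    intro d
    induction d with
    | zero => intro m hm _; subst hm; simp
    | succ d ih =>
      intro m hm hm3
      have hp := ih (m - 1) (by omega) (by omega)
      have hd := hdec (m - 1 - (j + 1)) (m - 1) (by omega) (by omega)
      have e : m - 1 + 1 = m := by omega
      rw [e] at hd
      omega
  have := H2 (i3 - i2) i3 (by omega) le_rfl
  omega

lemma my_descend {G : SimpleGraph V} (hG : G.Connected) (s x : V) (hx : x ≠ s) :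
    ∃ y, G.Adj x y ∧ G.dist s y < G.dist s x := by
  obtain ⟨p, hp⟩ := hG.exists_walk_length_eq_dist x s
  cases p with
  | nil => exact absurd rfl hx
  | @cons _ y _ hadj q =>
    refine ⟨y, hadj, ?_⟩
    have h1 : G.dist y s ≤ q.length := SimpleGraph.dist_le q
    have h2 : q.length + 1 = G.dist x s := by simpa using hp
    rw [show G.dist s y = G.dist y s from SimpleGraph.dist_comm,
      show G.dist s x = G.dist x s from SimpleGraph.dist_comm]
    omega

end Aux

section Fiber

lemma my_branch_fiber {V : Type} [Fintype V] {G : SimpleGraph V} (hG : G.Connected)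
    {u v : V} {W : G.Walk u v} (hW : IsBranchLike G W) (s : V) (k : ℕ) :
    {x : V | x ∈ W.support ∧ G.dist s x = k}.ncard ≤ 4 := by
  classical
  set n := W.length with hn
  have hsuplen : W.support.length = n + 1 := W.length_support
  -- injectivity facts
  have H : (∀ i j, i ≤ n → j ≤ n → W.getVert i = W.getVert j → i = j) ∨
      (3 ≤ n ∧ W.getVert 0 = W.getVert n ∧
        ∀ i j, 1 ≤ i → i ≤ n → 1 ≤ j → j ≤ n → W.getVert i = W.getVert j → i = j) := by
    rcases hW.1 with hp | ⟨hvu, hc⟩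
    · left
      intro i j hi hj heq
      have hnd := hp.support_nodup
      have e1 : W.support[i]'(by omega) = W.getVert i := my_support_getElem W (by omega)
      have e2 : W.support[j]'(by omega) = W.getVert j := my_support_getElem W (by omega)
      exact (List.Nodup.getElem_inj_iff hnd).mp (by rw [e1, e2]; exact heq)
    · right
      have hnd : W.support.tail.Nodup := by
        have := hc.support_nodup
        rwa [SimpleGraph.Walk.support_copy] at this
      have hn3 : 3 ≤ n := by
        have := hc.three_le_length
        simpa using this
      have htlen : W.support.tail.length = n := by simp [hsuplen]
      have key : ∀ i j, 1 ≤ i → i ≤ n → 1 ≤ j → j ≤ n → W.getVert i = W.getVert j → i = j := by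
        intro i j hi1 hi2 hj1 hj2 heq
        obtain ⟨i', rfl⟩ : ∃ i', i = i' + 1 := ⟨i - 1, by omega⟩
        obtain ⟨j', rfl⟩ : ∃ j', j = j' + 1 := ⟨j - 1, by omega⟩
        have e1 : W.support.tail[i']'(by omega) = W.getVert (i' + 1) := by
          rw [List.getElem_tail]
          exact my_support_getElem W (by omega)
        have e2 : W.support.tail[j']'(by omega) = W.getVert (j' + 1) := by
          rw [List.getElem_tail]
          exact my_support_getElem W (by omega)
        have := (List.Nodup.getElem_inj_iff hnd).mp (e1.trans (heq.trans e2.symm))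
        omega
      refine ⟨hn3, ?_, key⟩
      rw [SimpleGraph.Walk.getVert_zero, SimpleGraph.Walk.getVert_length]
      exact hvu.symm
  have fact2 : ∀ i, 0 < i → i < n → W.getVert i ≠ u ∧ W.getVert i ≠ v := by
    intro i h1 h2
    rcases H with Hf | ⟨hn3, h0n, Ht⟩
    · constructor
      · intro heq
        have : i = 0 := Hf i 0 (by omega) (by omega)
          (by rw [heq, SimpleGraph.Walk.getVert_zero])
        omega
      · intro heq
        have : i = n := Hf i n (by omega) le_rfl
          (by rw [heq, SimpleGraph.Walk.getVert_length])
        omega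
    · have hne : W.getVert i ≠ W.getVert n := by
        intro heq
        have := Ht i n (by omega) (by omega) (by omega) le_rfl heq
        omega
      have hgn : W.getVert n = v := SimpleGraph.Walk.getVert_length W
      have h0 : W.getVert 0 = u := SimpleGraph.Walk.getVert_zero W
      constructor
      · intro heq; exact hne (heq.trans (h0.symm.trans h0n))
      · intro heq; exact hne (heq.trans hgn.symm)
  have fact3 : ∀ i, 0 < i → i < n → W.getVert (i - 1) ≠ W.getVert (i + 1) := by
    intro i h1 h2 heq
    rcases H with Hf | ⟨hn3, h0n, Ht⟩
    · have := Hf (i - 1) (i + 1) (by omega) (by omega) heq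
      omega
    · by_cases hi1 : i = 1
      · subst hi1
        rw [show (1:ℕ) - 1 = 0 from rfl, h0n] at heq
        have := Ht n 2 (by omega) le_rfl (by omega) (by omega) heq
        omega
      · have := Ht (i - 1) (i + 1) (by omega) (by omega) (by omega) (by omega) heq
        omega
  -- choice of the exceptional index t
  obtain ⟨t, htle, ht⟩ : ∃ t, t ≤ n ∧ ∀ i, 0 < i → i < n → i ≠ t → W.getVert i ≠ s := by
    by_cases hs : ∃ i, 0 < i ∧ i < n ∧ W.getVert i = s
    · obtain ⟨t, ht1, ht2, ht3⟩ := hs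
      refine ⟨t, by omega, fun i hi1 hi2 hit heq => ?_⟩
      have : W.getVert i = W.getVert t := by rw [heq, ht3]
      rcases H with Hf | ⟨_, _, Ht⟩
      · exact hit (Hf i t (by omega) (by omega) this)
      · exact hit (Ht i t (by omega) (by omega) (by omega) (by omega) this)
    · push_neg at hs
      exact ⟨0, Nat.zero_le _, fun i hi1 hi2 _ => hs i hi1 hi2⟩
  set f : ℕ → ℕ := fun i => G.dist s (W.getVert i) with hf
  have hA : ∀ i, 0 < i → i < n → i ≠ t → (f (i - 1) < f i ∨ f (i + 1) < f i) := by
    intro i h1 h2 h3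
    have hxs : W.getVert i ≠ s := ht i h1 h2 h3
    have hmem : W.getVert i ∈ W.support :=
      SimpleGraph.Walk.mem_support_iff_exists_getVert.mpr ⟨i, rfl, by omega⟩
    have hdeg : (G.neighborSet (W.getVert i)).ncard = 2 :=
      hW.2 _ hmem (fact2 i h1 h2).1 (fact2 i h1 h2).2
    have hadj1 : G.Adj (W.getVert i) (W.getVert (i - 1)) := by
      have h' := W.adj_getVert_succ (i := i - 1) (by omega)
      rw [show i - 1 + 1 = i from by omega] at h'
      exact h'.symm
    have hadj2 : G.Adj (W.getVert i) (W.getVert (i + 1)) := W.adj_getVert_succ h2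
    have hsub : ({W.getVert (i - 1), W.getVert (i + 1)} : Set V) ⊆
        G.neighborSet (W.getVert i) := by
      intro y hy
      rcases hy with rfl | rfl
      · exact hadj1
      · exact hadj2
    have heqset : ({W.getVert (i - 1), W.getVert (i + 1)} : Set V) =
        G.neighborSet (W.getVert i) :=
      Set.eq_of_subset_of_ncard_le hsub
        (by rw [hdeg, Set.ncard_pair (fact3 i h1 h2)]) (Set.toFinite _)
    obtain ⟨y, hadj, hlt⟩ := my_descend hG s (W.getVert i) hxs
    have hy : y ∈ ({W.getVert (i - 1), W.getVert (i + 1)} : Set V) := by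
      rw [heqset]; exact hadj
    rcases hy with rfl | rfl
    · left; exact hlt
    · right; exact hlt
  -- index fiber bound
  set Ik : Finset ℕ := (Finset.Icc 0 n).filter (fun i => f i = k) with hIk
  have hIkcard : Ik.card ≤ 4 := by
    have seg1 := my_seg f 0 t k (fun i hi1 hi2 => hA i hi1 (by omega) (by omega))
    have seg2 := my_seg f t n k (fun i hi1 hi2 => hA i (by omega) hi2 (by omega))
    have hsub : Ik ⊆ ((Finset.Icc 0 t).filter (fun i => f i = k)) ∪
        ((Finset.Icc t n).filter (fun i => f i = k)) := by
      intro i hi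
      simp only [hIk, Finset.mem_filter, Finset.mem_Icc, Finset.mem_union] at hi ⊢
      omega
    calc Ik.card ≤ _ := Finset.card_le_card hsub
      _ ≤ _ := Finset.card_union_le _ _
      _ ≤ 4 := by omega
  -- vertex fiber injects into index fiber
  have hfin : (↑Ik : Set ℕ).Finite := Ik.finite_toSet
  have := Set.ncard_le_ncard_of_injOn
    (fun x => if h : ∃ i, W.getVert i = x ∧ i ≤ W.length then h.choose else 0)
    (s := {x : V | x ∈ W.support ∧ G.dist s x = k}) (t := (↑Ik : Set ℕ))
    ?_ ?_ hfin
  · rw [Set.ncard_coe_finset] at this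
    omega
  · intro x hx
    obtain ⟨hxsup, hxd⟩ := hx
    have hex : ∃ i, W.getVert i = x ∧ i ≤ W.length :=
      SimpleGraph.Walk.mem_support_iff_exists_getVert.mp hxsup
    simp only [hex, dif_pos]
    have hspec := hex.choose_spec
    simp only [hIk, Finset.coe_filter, Set.mem_setOf_eq, Finset.mem_Icc]
    refine ⟨⟨Nat.zero_le _, hspec.2⟩, ?_⟩
    simp only [hf, hspec.1]
    exact hxd
  · intro x1 hx1 x2 hx2 heq
    have hex1 : ∃ i, W.getVert i = x1 ∧ i ≤ W.length :=
      SimpleGraph.Walk.mem_support_iff_exists_getVert.mp hx1.1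
    have hex2 : ∃ i, W.getVert i = x2 ∧ i ≤ W.length :=
      SimpleGraph.Walk.mem_support_iff_exists_getVert.mp hx2.1
    simp only [hex1, hex2, dif_pos] at heq
    rw [← hex1.choose_spec.1, ← hex2.choose_spec.1, heq]

end Fiber

/-- There is a constant `c > 0` such that for every connected finite graph `G`,
branches `A` and `B` of `G` (possibly equal), and vertex `s`, the indistinct
set for `s`, `A`, `B` has at most `c * min |A| |B|` elements. -/
theorem indistinctSet_card_bound :
    ∃ c : ℕ, 0 < c ∧ ∀ (V : Type) [Fintype V] (G : SimpleGraph V),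
      G.Connected → ∀ (a₁ a₂ b₁ b₂ : V) (A : G.Walk a₁ a₂) (B : G.Walk b₁ b₂),
      IsBranch G A → IsBranch G B → ∀ s : V,
      (indistinctSet G s A B).ncard ≤
        c * min {x : V | x ∈ A.support}.ncard {x : V | x ∈ B.support}.ncard := by
  refine ⟨4, by norm_num, ?_⟩
  intro V _ G hG a₁ a₂ b₁ b₂ A B hA hB s
  classical
  have hfinS : (indistinctSet G s A B).Finite := Set.toFinite _
  set F := hfinS.toFinset with hF
  have hcard : (indistinctSet G s A B).ncard = F.card :=
    Set.ncard_eq_toFinset_card _ hfinS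
  have memF : ∀ p : V × V, p ∈ F ↔ (p.1 ∈ A.support ∧ p.2 ∈ B.support ∧
      p.1 ≠ p.2 ∧ G.dist s p.1 = G.dist s p.2) := by
    intro p
    rw [hF, Set.Finite.mem_toFinset]
    exact Iff.rfl
  have boundB : F.card ≤ 4 * {x : V | x ∈ B.support}.ncard := by
    have himg : F.card ≤ 4 * (F.image Prod.snd).card := by
      apply Finset.card_le_mul_card_image
      intro b _
      have hTfin : ({x : V | x ∈ A.support ∧ G.dist s x = G.dist s b}).Finite :=
        Set.toFinite _
      have h1 : (F.filter (fun p => p.2 = b)).card ≤ hTfin.toFinset.card := by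
        apply Finset.card_le_card_of_injOn Prod.fst
        · intro p hp
          simp only [Finset.coe_filter, Set.mem_setOf_eq] at hp
          obtain ⟨hpF, hpb⟩ := hp
          obtain ⟨hA1, _, _, hd⟩ := (memF p).mp hpF
          rw [Finset.mem_coe, Set.Finite.mem_toFinset]
          exact ⟨hA1, by rw [← hpb]; exact hd⟩
        · intro p hp q hq hpq
          simp only [Finset.coe_filter, Set.mem_setOf_eq] at hp hq
          exact Prod.ext hpq (hp.2.trans hq.2.symm)
      have h2 : hTfin.toFinset.card ≤ 4 := by
        rw [← Set.ncard_eq_toFinset_card _ hTfin]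
        exact my_branch_fiber hG hA.1 s (G.dist s b)
      exact le_trans h1 h2
    have himg2 : (F.image Prod.snd).card ≤ {x : V | x ∈ B.support}.ncard := by
      have hBfin : ({x : V | x ∈ B.support}).Finite := Set.toFinite _
      rw [Set.ncard_eq_toFinset_card _ hBfin]
      apply Finset.card_le_card
      intro b hb
      simp only [Finset.mem_image] at hb
      obtain ⟨p, hpF, rfl⟩ := hb
      rw [Set.Finite.mem_toFinset]
      exact ((memF p).mp hpF).2.1
    calc F.card ≤ 4 * (F.image Prod.snd).card := himg
      _ ≤ 4 * {x : V | x ∈ B.support}.ncard := by omega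
  have boundA : F.card ≤ 4 * {x : V | x ∈ A.support}.ncard := by
    have himg : F.card ≤ 4 * (F.image Prod.fst).card := by
      apply Finset.card_le_mul_card_image
      intro a _
      have hTfin : ({x : V | x ∈ B.support ∧ G.dist s x = G.dist s a}).Finite :=
        Set.toFinite _
      have h1 : (F.filter (fun p => p.1 = a)).card ≤ hTfin.toFinset.card := by
        apply Finset.card_le_card_of_injOn Prod.snd
        · intro p hp
          simp only [Finset.coe_filter, Set.mem_setOf_eq] at hp
          obtain ⟨hpF, hpa⟩ := hp
          obtain ⟨_, hB1, _, hd⟩ := (memF p).mp hpF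
          rw [Finset.mem_coe, Set.Finite.mem_toFinset]
          exact ⟨hB1, by rw [← hd, hpa]⟩
        · intro p hp q hq hpq
          simp only [Finset.coe_filter, Set.mem_setOf_eq] at hp hq
          exact Prod.ext (hp.2.trans hq.2.symm) hpq
      have h2 : hTfin.toFinset.card ≤ 4 := by
        rw [← Set.ncard_eq_toFinset_card _ hTfin]
        exact my_branch_fiber hG hB.1 s (G.dist s a)
      exact le_trans h1 h2
    have himg2 : (F.image Prod.fst).card ≤ {x : V | x ∈ A.support}.ncard := by
      have hAfin : ({x : V | x ∈ A.support}).Finite := Set.toFinite _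
      rw [Set.ncard_eq_toFinset_card _ hAfin]
      apply Finset.card_le_card
      intro a ha
      simp only [Finset.mem_image] at ha
      obtain ⟨p, hpF, rfl⟩ := ha
      rw [Set.Finite.mem_toFinset]
      exact ((memF p).mp hpF).1
    calc F.card ≤ 4 * (F.image Prod.fst).card := himg
      _ ≤ 4 * {x : V | x ∈ A.support}.ncard := by omega
  rw [hcard]
  rcases le_total {x : V | x ∈ A.support}.ncard {x : V | x ∈ B.support}.ncard with h | h
  · rw [min_eq_left h]; exact boundA
  · rw [min_eq_right h]; exact boundB
end

section
/- Let G be a connected finite graph, let A and B be branches of G (possibly A = B), and let s be a vertex of G. Then the indistinct set for s, A, and B is contained in a union of at most nine sets, each of which, when a pair (a,b) is identified with the point (p_A(a), p_B(b)) where p_A and p_B denote positions of vertices along the branches A and B respectively, lies on a line of slope +1 or −1 (i.e., within each such set, p_A(a) + p_B(b) is constant, or p_A(a) − p_B(b) is constant). -/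
open SimpleGraph

variable {V : Type*}

section NineAuxSection

namespace NineAux

variable {V : Type} [Fintype V] [DecidableEq V] {G : SimpleGraph V}

/-- Consecutive entries of a walk's support are adjacent. -/
lemma adj_support_getD {u v : V} (d : V) (p : G.Walk u v) :
    ∀ i < p.length, G.Adj (p.support.getD i d) (p.support.getD (i+1) d) := by
  induction p with
  | nil => simp
  | @cons a b c h q ih =>
    intro i hi
    cases i with
    | zero =>
      have hb : q.support.getD 0 d = b := by rw [q.support_eq_cons]; rfl
      rw [Walk.support_cons]
      simp only [List.getD_cons_zero, List.getD_cons_succ, hb]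
      exact h
    | succ i =>
      rw [Walk.support_cons]
      simp only [List.getD_cons_succ]
      exact ih i (by simpa [Walk.length_cons] using hi)

/-- Distance along a chain of adjacent vertices. -/
lemma dist_le_chain (hG : G.Connected) (x : ℕ → V) (n : ℕ)
    (hadj : ∀ i < n, G.Adj (x i) (x (i+1))) :
    ∀ i m, i + m ≤ n → G.dist (x i) (x (i+m)) ≤ m := by
  intro i m
  induction m with
  | zero => intro _; simp [dist_self]
  | succ m ih =>
    intro h
    have h1 : G.dist (x i) (x (i+m)) ≤ m := ih (by omega)
    have h2 : G.dist (x (i+m)) (x (i+m+1)) = 1 :=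
      dist_eq_one_iff_adj.mpr (hadj (i+m) (by omega))
    have h3 := hG.dist_triangle (u := x i) (v := x (i+m)) (w := x (i+m+1))
    have : i + (m+1) = i + m + 1 := by omega
    rw [this]
    omega

/-- The corridor lemma: a walk starting at an interior vertex of a degree-two
corridor must pay the corridor cost. -/
lemma corridor (x : ℕ → V) (n : ℕ)
    (hadj : ∀ i < n, G.Adj (x i) (x (i+1)))
    (hdeg : ∀ i, 0 < i → i < n → (G.neighborSet (x i)).ncard = 2)
    (hne : ∀ i, 0 < i → i < n → x (i-1) ≠ x (i+1))
    (y : V) (φ : ℕ → ℕ)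
    (h0 : φ 0 ≤ G.dist y (x 0)) (hn : φ n ≤ G.dist y (x n))
    (hnil : ∀ i, 0 < i → i < n → x i = y → φ i = 0)
    (hlip : ∀ i, 0 < i → i < n → φ i ≤ min (φ (i-1)) (φ (i+1)) + 1) :
    ∀ (w : V) (P : G.Walk w y) (i : ℕ), i ≤ n → w = x i → φ i ≤ P.length := by
  intro w P
  induction P with
  | nil =>
    intro i hi hw
    rcases Nat.eq_zero_or_pos i with rfl | hpos
    · -- y = x 0
      rw [hw] at h0
      simpa [dist_self] using h0
    rcases Nat.eq_or_lt_of_le hi with rfl | hlt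
    · rw [hw] at hn
      simpa [dist_self] using hn
    · simp [hnil i hpos hlt hw.symm]
  | @cons a b c h P ih =>
    intro i hi hw
    rcases Nat.eq_zero_or_pos i with rfl | hpos
    · -- direct distance bound
      have hd : G.dist c (x 0) ≤ (Walk.cons h P).length := by
        rw [SimpleGraph.dist_comm, ← hw]
        exact SimpleGraph.dist_le _
      omega
    rcases Nat.eq_or_lt_of_le hi with rfl | hlt
    · have hd : G.dist c (x i) ≤ (Walk.cons h P).length := by
        rw [SimpleGraph.dist_comm, ← hw]
        exact SimpleGraph.dist_le _
      omega
    · -- interior step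
      have hi1 : i - 1 + 1 = i := by omega
      have hadj1 : G.Adj (x i) (x (i-1)) := by
        have := hadj (i-1) (by omega)
        rw [hi1] at this
        exact this.symm
      have hadj2 : G.Adj (x i) (x (i+1)) := hadj i (by omega)
      have hpair : ({x (i-1), x (i+1)} : Set V) ⊆ G.neighborSet (x i) := by
        intro z hz
        rcases hz with rfl | hz
        · exact hadj1
        · rcases hz with rfl; exact hadj2
      have hcard : ({x (i-1), x (i+1)} : Set V).ncard = 2 :=
        Set.ncard_pair (hne i hpos hlt)
      have hset : ({x (i-1), x (i+1)} : Set V) = G.neighborSet (x i) := by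
        apply Set.eq_of_subset_of_ncard_le hpair _ (Set.toFinite _)
        rw [hdeg i hpos hlt, hcard]
      have hb : b ∈ ({x (i-1), x (i+1)} : Set V) := by
        rw [hset]
        rw [hw] at h
        exact h
      have hL := hlip i hpos hlt
      rcases hb with hb | hb
      · have := ih h0 hn hnil (i-1) (by omega) hb
        rw [Walk.length_cons]
        omega
      · simp only [Set.mem_singleton_iff] at hb
        have := ih h0 hn hnil (i+1) (by omega) hb
        rw [Walk.length_cons]
        omega



/-- The distance from `s` along a degree-two corridor is piecewise linear with
at most three pieces of slope `±1`. -/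
lemma three_pieces (hG : G.Connected) (x : ℕ → V) (n : ℕ) (s : V)
    (hadj : ∀ i < n, G.Adj (x i) (x (i+1)))
    (hdeg : ∀ i, 0 < i → i < n → (G.neighborSet (x i)).ncard = 2)
    (hinj : ∀ i j, i < j → j ≤ n → x i = x j → i = 0 ∧ j = n)
    (hloop : x 0 = x n → 3 ≤ n ∨ n = 0) :
    ∃ t1 t2 : ℕ, ∃ e1 e2 e3 c1 c2 c3 : ℤ,
      (e1 = 1 ∨ e1 = -1) ∧ (e2 = 1 ∨ e2 = -1) ∧ (e3 = 1 ∨ e3 = -1) ∧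
      ∀ i ≤ n,
        (i ≤ t1 → (G.dist s (x i) : ℤ) = c1 + e1 * i) ∧
        (t1 < i → i ≤ t2 → (G.dist s (x i) : ℤ) = c2 + e2 * i) ∧
        (t2 < i → (G.dist s (x i) : ℤ) = c3 + e3 * i) := by
  have hne : ∀ i, 0 < i → i < n → x (i-1) ≠ x (i+1) := by
    intro i h1 h2 heq
    obtain ⟨h3, h4⟩ := hinj (i-1) (i+1) (by omega) (by omega) heq
    have h5 : x 0 = x n := by
      rw [← h3, ← h4]; exact heq
    have := hloop h5
    omega
  set mu := G.dist s (x 0) with hmu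
  set mv := G.dist s (x n) with hmv
  have hub0 : ∀ i ≤ n, G.dist s (x i) ≤ mu + i := by
    intro i hi
    have h1 := dist_le_chain hG x n hadj 0 i (by omega)
    simp only [Nat.zero_add] at h1
    have h2 := hG.dist_triangle (u := s) (v := x 0) (w := x i)
    omega
  have hubn : ∀ i ≤ n, G.dist s (x i) ≤ mv + (n - i) := by
    intro i hi
    have h1 := dist_le_chain hG x n hadj i (n - i) (by omega)
    have e : i + (n - i) = n := by omega
    rw [e] at h1
    have h2 := hG.dist_triangle (u := s) (v := x n) (w := x i)
    rw [SimpleGraph.dist_comm (u := x i)] at h1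
    omega
  by_cases hS : ∃ k, 0 < k ∧ k < n ∧ x k = s
  · -- s is an interior vertex of the corridor
    obtain ⟨k, hk1, hk2, hks⟩ := hS
    have hubk : ∀ i ≤ n, G.dist s (x i) ≤ (k - i) + (i - k) := by
      intro i hi
      rcases le_total i k with h | h
      · have h1 := dist_le_chain hG x n hadj i (k - i) (by omega)
        have e : i + (k - i) = k := by omega
        rw [e, hks] at h1
        rw [SimpleGraph.dist_comm (u := x i)] at h1
        omega
      · have h1 := dist_le_chain hG x n hadj k (i - k) (by omega)
        have e : k + (i - k) = i := by omega
        rw [e, hks] at h1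
        omega
    have hflow : ∀ i ≤ n,
        min ((k - i) + (i - k)) (min (mu + i) (mv + (n - i))) ≤ G.dist s (x i) := by
      intro i hi
      obtain ⟨P, hP⟩ := hG.exists_walk_length_eq_dist (x i) s
      have := corridor x n hadj hdeg hne s
        (fun j => min ((k - j) + (j - k)) (min (mu + j) (mv + (n - j))))
        (by omega) (by omega)
        (by
          intro j h1 h2 heq
          rcases lt_trichotomy j k with h | h | h
          · obtain ⟨h3, _⟩ := hinj j k h (by omega) (by rw [heq, hks])
            omega
          · omega
          · obtain ⟨h3, _⟩ := hinj k j h (by omega) (by rw [heq, hks])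
            omega)
        (by intro j h1 h2; omega)
        (x i) P i hi rfl
      rw [hP, SimpleGraph.dist_comm (u := x i)] at this
      exact this
    have hfEq : ∀ i ≤ n,
        G.dist s (x i) = min ((k - i) + (i - k)) (min (mu + i) (mv + (n - i))) := by
      intro i hi
      have h1 := hub0 i hi
      have h2 := hubn i hi
      have h3 := hubk i hi
      have h4 := hflow i hi
      omega
    set D := G.dist (x n) (x 0) with hD
    have hL2 : min k ((n - k) + D) ≤ mu := by
      obtain ⟨P, hP⟩ := hG.exists_walk_length_eq_dist (x k) (x 0)
      have := corridor x n hadj hdeg hne (x 0)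
        (fun j => min j ((n - j) + D))
        (by omega)
        (by
          have : G.dist (x 0) (x n) = D := SimpleGraph.dist_comm
          omega)
        (by
          intro j h1 h2 heq
          obtain ⟨_, h4⟩ := hinj 0 j h1 (by omega) heq.symm
          omega)
        (by intro j h1 h2; omega)
        (x k) P k (by omega) rfl
      rw [hP] at this
      have e : G.dist (x k) (x 0) = mu := by rw [hks, hmu]
      omega
    have hL2' : min (n - k) (k + D) ≤ mv := by
      obtain ⟨P, hP⟩ := hG.exists_walk_length_eq_dist (x k) (x n)
      have := corridor x n hadj hdeg hne (x n)
        (fun j => min (n - j) (j + D))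
        (by omega)
        (by omega)
        (by
          intro j h1 h2 heq
          obtain ⟨h3, _⟩ := hinj j n h2 (le_refl n) heq
          omega)
        (by intro j h1 h2; omega)
        (x k) P k (by omega) rfl
      rw [hP] at this
      have e : G.dist (x k) (x n) = mv := by rw [hks, hmv]
      omega
    have hmuk : mu ≤ k := by have := hfEq 0 (by omega); omega
    have hmvk : mv ≤ n - k := by have := hfEq n (le_refl n); omega
    by_cases hcase : k ≤ mu
    · refine ⟨k, (mv + n + k)/2, -1, 1, -1, (k : ℤ), -(k : ℤ), (mv : ℤ) + n,
        Or.inr rfl, Or.inl rfl, Or.inr rfl, ?_⟩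
      intro i hi
      have hf := hfEq i hi
      refine ⟨fun h1 => by omega, fun h1 h2 => by omega, fun h1 => by omega⟩
    · push_neg at hcase
      have hmuL : (n - k) + D ≤ mu := by omega
      have hmvE : mv = n - k := by omega
      refine ⟨(k - mu)/2, k, 1, -1, 1, (mu : ℤ), (k : ℤ), -(k : ℤ),
        Or.inl rfl, Or.inr rfl, Or.inl rfl, ?_⟩
      intro i hi
      have hf := hfEq i hi
      refine ⟨fun h1 => by omega, fun h1 h2 => by omega, fun h1 => by omega⟩
  · -- s is not interior
    push_neg at hS
    have hflow : ∀ i ≤ n, min (mu + i) (mv + (n - i)) ≤ G.dist s (x i) := by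
      intro i hi
      obtain ⟨P, hP⟩ := hG.exists_walk_length_eq_dist (x i) s
      have := corridor x n hadj hdeg hne s
        (fun j => min (mu + j) (mv + (n - j)))
        (by omega) (by omega)
        (by
          intro j h1 h2 heq
          exact absurd heq (hS j h1 h2))
        (by intro j h1 h2; omega)
        (x i) P i hi rfl
      rw [hP, SimpleGraph.dist_comm (u := x i)] at this
      exact this
    have hfEq : ∀ i ≤ n, G.dist s (x i) = min (mu + i) (mv + (n - i)) := by
      intro i hi
      have h1 := hub0 i hi
      have h2 := hubn i hi
      have h4 := hflow i hi
      omega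
    have hmun : mu ≤ mv + n := by have := hfEq 0 (by omega); omega
    refine ⟨(mv + n - mu)/2, n, 1, -1, 1, (mu : ℤ), (mv : ℤ) + n, 0,
      Or.inl rfl, Or.inr rfl, Or.inl rfl, ?_⟩
    intro i hi
    have hf := hfEq i hi
    refine ⟨fun h1 => by omega, fun h1 h2 => by omega, fun h1 => by omega⟩

/-- Pieces data for a branch-like walk. -/
lemma branchlike_pieces (hG : G.Connected) {u v : V} (W : G.Walk u v)
    (hW : IsBranchLike G W) (s : V) :
    ∃ t1 t2 : ℕ, ∃ e1 e2 e3 c1 c2 c3 : ℤ,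
      (e1 = 1 ∨ e1 = -1) ∧ (e2 = 1 ∨ e2 = -1) ∧ (e3 = 1 ∨ e3 = -1) ∧
      ∀ i ≤ W.length,
        (i ≤ t1 → (G.dist s (W.support.getD i u) : ℤ) = c1 + e1 * i) ∧
        (t1 < i → i ≤ t2 → (G.dist s (W.support.getD i u) : ℤ) = c2 + e2 * i) ∧
        (t2 < i → (G.dist s (W.support.getD i u) : ℤ) = c3 + e3 * i) := by
  set x : ℕ → V := fun i => W.support.getD i u with hx
  set n := W.length with hn
  have hlen : W.support.length = n + 1 := W.length_support
  have hget : ∀ i, i < n + 1 → ∀ (h : i < W.support.length),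
      x i = W.support.get ⟨i, h⟩ := by
    intro i hi h
    simp only [hx]
    exact List.getD_eq_get (d := u) (i := ⟨i, h⟩)
  have hadj : ∀ i < n, G.Adj (x i) (x (i+1)) := fun i hi => adj_support_getD u W i hi
  have hx0 : x 0 = u := by
    simp only [hx]
    rw [W.support_eq_cons]
    rfl
  have hxn : x n = v := by
    rw [hget n (by omega) (by omega)]
    have h1 := W.getLast_support
    rw [List.getLast_eq_getElem] at h1
    have h2 : W.support.length - 1 = n := by omega
    simp only [h2] at h1
    exact h1
  have hmem : ∀ i ≤ n, x i ∈ W.support := by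
    intro i hi
    rw [hget i (by omega) (by omega)]
    exact List.get_mem _ _
  have hinj : ∀ i j, i < j → j ≤ n → x i = x j → i = 0 ∧ j = n := by
    intro i j hij hj heq
    rcases hW.1 with hp | ⟨hvu, hc⟩
    · exfalso
      have := hp.support_nodup.get_inj_iff
        (i := ⟨i, by omega⟩) (j := ⟨j, by omega⟩)
      rw [← hget i (by omega) (by omega), ← hget j (by omega) (by omega)] at this
      have := this.mp heq
      simp only [Fin.mk.injEq] at this
      omega
    · have hnd : W.support.tail.Nodup := by
        have := hc.support_nodup
        rwa [Walk.support_copy] at this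
      have htlen : W.support.tail.length = n := by
        rw [W.support_eq_cons] at hlen
        simpa using hlen
      have htget : ∀ m, 0 < m → m ≤ n → ∀ (h : m - 1 < W.support.tail.length),
          W.support.tail.get ⟨m - 1, h⟩ = x m := by
        intro m hm hmn h
        rw [hget m (by omega) (by omega)]
        have e : m - 1 + 1 = m := by omega
        rw [List.get_tail]
        congr 1
        exact Fin.ext e
      have htinj : ∀ a b, 0 < a → a ≤ n → 0 < b → b ≤ n → x a = x b → a = b := by
        intro a b ha han hb hbn heq'
        have := hnd.get_inj_iff (i := ⟨a - 1, by omega⟩) (j := ⟨b - 1, by omega⟩)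
        rw [htget a ha han (by omega), htget b hb hbn (by omega)] at this
        have := this.mp heq'
        simp only [Fin.mk.injEq] at this
        omega
      rcases Nat.eq_zero_or_pos i with rfl | hipos
      · refine ⟨rfl, ?_⟩
        have hxnn : x j = x n := by
          rw [← heq, hx0, hxn, hvu]
        exact htinj j n (by omega) hj (by
          have := hc.three_le_length
          rw [Walk.length_copy] at this
          omega) (le_refl n) hxnn
      · exact absurd (htinj i j hipos (by omega) (by omega) hj heq) (by omega)
  have hloop : x 0 = x n → 3 ≤ n ∨ n = 0 := by
    intro heq
    rcases hW.1 with hp | ⟨hvu, hc⟩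
    · rcases Nat.eq_zero_or_pos n with h0 | hpos
      · right; exact h0
      · exfalso
        have := hp.support_nodup.get_inj_iff
          (i := (⟨0, by omega⟩ : Fin W.support.length)) (j := ⟨n, by omega⟩)
        rw [← hget 0 (by omega) (by omega), ← hget n (by omega) (by omega)] at this
        have := this.mp heq
        simp only [Fin.mk.injEq] at this
        omega
    · left
      have := hc.three_le_length
      rwa [Walk.length_copy] at this
  have hdeg : ∀ i, 0 < i → i < n → (G.neighborSet (x i)).ncard = 2 := by
    intro i h1 h2
    apply hW.2 (x i) (hmem i (by omega))
    · intro heq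
      rw [← hx0] at heq
      rcases hW.1 with hp | ⟨hvu, hc⟩
      · have := hinj 0 i h1 (by omega) heq.symm
        omega
      · -- x i = x 0 = x n
        have heq' : x i = x n := by
          rw [heq, hx0, hxn, hvu]
        have := hinj i n h2 (le_refl n) heq'
        omega
    · intro heq
      rw [← hxn] at heq
      have := hinj i n h2 (le_refl n) heq
      omega
  exact three_pieces hG x n s hadj hdeg hinj hloop

end NineAux

end NineAuxSection

/-- The indistinct set for `s`, `A`, `B` is contained in the union of at most
nine sets, each of which lies on a line of slope `+1` or `-1` in the coordinates
given by positions along the two branches. -/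
theorem indistinctSet_nine_diagonals (V : Type) [Fintype V] [DecidableEq V]
    (G : SimpleGraph V) (hG : G.Connected) (a₁ a₂ b₁ b₂ : V)
    (A : G.Walk a₁ a₂) (B : G.Walk b₁ b₂)
    (hA : IsBranch G A) (hB : IsBranch G B) (s : V) :
    ∃ S : Fin 9 → Set (V × V),
      indistinctSet G s A B ⊆ ⋃ i, S i ∧
      ∀ i : Fin 9,
        (∃ c : ℤ, ∀ p ∈ S i,
          (A.support.idxOf p.1 : ℤ) + (B.support.idxOf p.2 : ℤ) = c) ∨
        (∃ c : ℤ, ∀ p ∈ S i,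
          (A.support.idxOf p.1 : ℤ) - (B.support.idxOf p.2 : ℤ) = c) := by
  classical
  obtain ⟨tA1, tA2, eA1, eA2, eA3, cA1, cA2, cA3, hEA1, hEA2, hEA3, hfA⟩ :=
    NineAux.branchlike_pieces hG A hA.1 s
  obtain ⟨tB1, tB2, eB1, eB2, eB3, cB1, cB2, cB3, hEB1, hEB2, hEB3, hfB⟩ :=
    NineAux.branchlike_pieces hG B hB.1 s
  have hidxA : ∀ p : V × V, p ∈ indistinctSet G s A B →
      A.support.idxOf p.1 ≤ A.length ∧
      A.support.getD (A.support.idxOf p.1) a₁ = p.1 := by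
    intro p hp
    have hm : p.1 ∈ A.support := hp.1
    have hlt : A.support.idxOf p.1 < A.support.length := List.idxOf_lt_length_iff.mpr hm
    have hls := A.length_support
    refine ⟨by omega, ?_⟩
    rw [List.getD_eq_getElem (hn := hlt)]
    exact List.idxOf_get hlt
  have hidxB : ∀ p : V × V, p ∈ indistinctSet G s A B →
      B.support.idxOf p.2 ≤ B.length ∧
      B.support.getD (B.support.idxOf p.2) b₁ = p.2 := by
    intro p hp
    have hm : p.2 ∈ B.support := hp.2.1
    have hlt : B.support.idxOf p.2 < B.support.length := List.idxOf_lt_length_iff.mpr hm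
    have hls := B.length_support
    refine ⟨by omega, ?_⟩
    rw [List.getD_eq_getElem (hn := hlt)]
    exact List.idxOf_get hlt
  set QA : ℕ → ℕ → Prop := fun j i =>
    if j = 0 then i ≤ tA1 else if j = 1 then tA1 < i ∧ i ≤ tA2 else tA2 < i with hQA
  set QB : ℕ → ℕ → Prop := fun j i =>
    if j = 0 then i ≤ tB1 else if j = 1 then tB1 < i ∧ i ≤ tB2 else tB2 < i with hQB
  have KEY : ∀ jA jB : ℕ,
      (∃ c : ℤ, ∀ p ∈ {p : V × V | p ∈ indistinctSet G s A B ∧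
          QA jA (A.support.idxOf p.1) ∧ QB jB (B.support.idxOf p.2)},
        (A.support.idxOf p.1 : ℤ) + (B.support.idxOf p.2 : ℤ) = c) ∨
      (∃ c : ℤ, ∀ p ∈ {p : V × V | p ∈ indistinctSet G s A B ∧
          QA jA (A.support.idxOf p.1) ∧ QB jB (B.support.idxOf p.2)},
        (A.support.idxOf p.1 : ℤ) - (B.support.idxOf p.2 : ℤ) = c) := by
    intro jA jB
    have hA' : ∃ e c : ℤ, (e = 1 ∨ e = -1) ∧ ∀ p ∈ indistinctSet G s A B,
        QA jA (A.support.idxOf p.1) →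
        (G.dist s p.1 : ℤ) = c + e * (A.support.idxOf p.1) := by
      obtain ⟨hle, hgd⟩ : True := trivial
      by_cases h0 : jA = 0
      · refine ⟨eA1, cA1, hEA1, fun p hp hq => ?_⟩
        obtain ⟨hle, hgd⟩ := hidxA p hp
        simp only [hQA, h0, if_true] at hq
        have := (hfA _ hle).1 hq
        rwa [hgd] at this
      by_cases h1 : jA = 1
      · refine ⟨eA2, cA2, hEA2, fun p hp hq => ?_⟩
        obtain ⟨hle, hgd⟩ := hidxA p hp
        simp only [hQA, h0, h1, if_false, if_true] at hq
        have := (hfA _ hle).2.1 hq.1 hq.2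
        rwa [hgd] at this
      · refine ⟨eA3, cA3, hEA3, fun p hp hq => ?_⟩
        obtain ⟨hle, hgd⟩ := hidxA p hp
        simp only [hQA, h0, h1, if_false] at hq
        have := (hfA _ hle).2.2 hq
        rwa [hgd] at this
    have hB' : ∃ e c : ℤ, (e = 1 ∨ e = -1) ∧ ∀ p ∈ indistinctSet G s A B,
        QB jB (B.support.idxOf p.2) →
        (G.dist s p.2 : ℤ) = c + e * (B.support.idxOf p.2) := by
      by_cases h0 : jB = 0
      · refine ⟨eB1, cB1, hEB1, fun p hp hq => ?_⟩
        obtain ⟨hle, hgd⟩ := hidxB p hp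
        simp only [hQB, h0, if_true] at hq
        have := (hfB _ hle).1 hq
        rwa [hgd] at this
      by_cases h1 : jB = 1
      · refine ⟨eB2, cB2, hEB2, fun p hp hq => ?_⟩
        obtain ⟨hle, hgd⟩ := hidxB p hp
        simp only [hQB, h0, h1, if_false, if_true] at hq
        have := (hfB _ hle).2.1 hq.1 hq.2
        rwa [hgd] at this
      · refine ⟨eB3, cB3, hEB3, fun p hp hq => ?_⟩
        obtain ⟨hle, hgd⟩ := hidxB p hp
        simp only [hQB, h0, h1, if_false] at hq
        have := (hfB _ hle).2.2 hq
        rwa [hgd] at this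
    obtain ⟨e1, c1, he1, hq1⟩ := hA'
    obtain ⟨e2, c2, he2, hq2⟩ := hB'
    have main : ∀ p : V × V, p ∈ indistinctSet G s A B →
        QA jA (A.support.idxOf p.1) → QB jB (B.support.idxOf p.2) →
        c1 + e1 * (A.support.idxOf p.1 : ℤ) = c2 + e2 * (B.support.idxOf p.2 : ℤ) := by
      intro p hp hqa hqb
      have h1 := hq1 p hp hqa
      have h2 := hq2 p hp hqb
      have hd : G.dist s p.1 = G.dist s p.2 := hp.2.2.2
      omega
    rcases he1 with rfl | rfl <;> rcases he2 with rfl | rfl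
    · right
      refine ⟨c2 - c1, ?_⟩
      rintro p ⟨hp, hqa, hqb⟩
      have := main p hp hqa hqb
      omega
    · left
      refine ⟨c2 - c1, ?_⟩
      rintro p ⟨hp, hqa, hqb⟩
      have := main p hp hqa hqb
      omega
    · left
      refine ⟨c1 - c2, ?_⟩
      rintro p ⟨hp, hqa, hqb⟩
      have := main p hp hqa hqb
      omega
    · right
      refine ⟨c1 - c2, ?_⟩
      rintro p ⟨hp, hqa, hqb⟩
      have := main p hp hqa hqb
      omega
  refine ⟨fun m => {p : V × V | p ∈ indistinctSet G s A B ∧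
      QA (m.1 / 3) (A.support.idxOf p.1) ∧ QB (m.1 % 3) (B.support.idxOf p.2)}, ?_, ?_⟩
  · intro p hp
    have hja : ∃ jA < 3, QA jA (A.support.idxOf p.1) := by
      rcases le_or_gt (A.support.idxOf p.1) tA1 with h | h
      · exact ⟨0, by omega, by simp [hQA, h]⟩
      rcases le_or_gt (A.support.idxOf p.1) tA2 with h' | h'
      · exact ⟨1, by omega, by simp [hQA, h, h']⟩
      · exact ⟨2, by omega, by simp [hQA, h']⟩
    have hjb : ∃ jB < 3, QB jB (B.support.idxOf p.2) := by
      rcases le_or_gt (B.support.idxOf p.2) tB1 with h | h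
      · exact ⟨0, by omega, by simp [hQB, h]⟩
      rcases le_or_gt (B.support.idxOf p.2) tB2 with h' | h'
      · exact ⟨1, by omega, by simp [hQB, h, h']⟩
      · exact ⟨2, by omega, by simp [hQB, h']⟩
    obtain ⟨jA, hjA3, hqa⟩ := hja
    obtain ⟨jB, hjB3, hqb⟩ := hjb
    refine Set.mem_iUnion.mpr ⟨⟨3 * jA + jB, by omega⟩, ?_⟩
    have e1 : (3 * jA + jB) / 3 = jA := by omega
    have e2 : (3 * jA + jB) % 3 = jB := by omega
    exact ⟨hp, by rw [e1]; exact hqa, by rw [e2]; exact hqb⟩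
  · intro m
    exact KEY (m.1 / 3) (m.1 % 3)
end

section
/- Let G be a connected finite graph, let C be a branch of G that is a path with endpoints p and q, let s be an interior vertex of C, and let v be a vertex of G that is not a vertex of C. Then d(s,v) = min(d_C(s,p) + d(p,v), d_C(s,q) + d(q,v)), where d denotes shortest-path distance in G and d_C denotes distance measured along the path C. -/
open SimpleGraph

variable {V : Type*}

section Aux
variable {V : Type*} {G : SimpleGraph V}

lemma aux_support_getElem {u w : V} (W : G.Walk u w) :
    ∀ (i : ℕ) (h : i < W.support.length), W.support[i] = W.getVert i := by
  induction W with
  | nil =>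
      intro i h
      cases i with
      | zero => simp [Walk.getVert]
      | succ n => simp [Walk.support_nil] at h
  | cons h p ih =>
      intro i hi
      cases i with
      | zero => simp [Walk.getVert]
      | succ n =>
          simp only [Walk.support_cons, List.getElem_cons_succ, Walk.getVert_cons_succ]
          exact ih n (by simpa [Walk.length_support] using hi)

lemma aux_getVert_inj {u w : V} {W : G.Walk u w} (hW : W.IsPath) {i j : ℕ}
    (hi : i ≤ W.length) (hj : j ≤ W.length) (hij : i ≠ j) :
    W.getVert i ≠ W.getVert j := by
  have hi' : i < W.support.length := by rw [Walk.length_support]; omega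
  have hj' : j < W.support.length := by rw [Walk.length_support]; omega
  rw [← aux_support_getElem W i hi', ← aux_support_getElem W j hj']
  intro h
  exact hij (hW.support_nodup.getElem_inj_iff.mp h)

lemma aux_dist_getVert_le (hG : G.Connected) {u w : V} (W : G.Walk u w) :
    ∀ i ≤ W.length, G.dist u (W.getVert i) ≤ i := by
  intro i
  induction i with
  | zero => intro _; simp [Walk.getVert_zero, dist_self]
  | succ n ih =>
      intro h
      have hadj : G.Adj (W.getVert n) (W.getVert (n+1)) := W.adj_getVert_succ (by omega)
      have h1 : G.dist (W.getVert n) (W.getVert (n+1)) ≤ 1 := by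
        simpa using dist_le (Walk.cons hadj Walk.nil)
      have h2 := hG.dist_triangle (u := u) (v := W.getVert n) (w := W.getVert (n+1))
      have := ih (by omega)
      omega

lemma aux_neighbors {u w : V} [Finite V] {W : G.Walk u w} (hW : W.IsPath)
    (hdeg : ∀ x ∈ W.support, x ≠ u → x ≠ w → (G.neighborSet x).ncard = 2)
    {i : ℕ} (h0 : 0 < i) (hl : i < W.length) {y : V} (hadj : G.Adj (W.getVert i) y) :
    y = W.getVert (i - 1) ∨ y = W.getVert (i + 1) := by
  set x := W.getVert i with hx
  have hmem : x ∈ W.support := Walk.mem_support_iff_exists_getVert.mpr ⟨i, rfl, by omega⟩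
  have hxu : x ≠ u := by
    have := aux_getVert_inj hW (i := i) (j := 0) (by omega) (by omega) (by omega)
    simpa [Walk.getVert_zero] using this
  have hxw : x ≠ w := by
    have := aux_getVert_inj hW (i := i) (j := W.length) (by omega) le_rfl (by omega)
    simpa [Walk.getVert_length] using this
  have hcard := hdeg x hmem hxu hxw
  have ha : W.getVert (i - 1) ∈ G.neighborSet x := by
    have := W.adj_getVert_succ (i := i - 1) (by omega)
    have h' : i - 1 + 1 = i := by omega
    rw [h'] at this
    exact this.symm
  have hb : W.getVert (i + 1) ∈ G.neighborSet x := W.adj_getVert_succ hl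
  have hne : W.getVert (i - 1) ≠ W.getVert (i + 1) :=
    aux_getVert_inj hW (by omega) (by omega) (by omega)
  have hsub : ({W.getVert (i - 1), W.getVert (i + 1)} : Set V) ⊆ G.neighborSet x := by
    intro z hz; rcases hz with hz | hz <;> subst hz <;> assumption
  have hfin : (G.neighborSet x).Finite := Set.toFinite _
  have heq : ({W.getVert (i - 1), W.getVert (i + 1)} : Set V) = G.neighborSet x := by
    apply Set.eq_of_subset_of_ncard_le hsub _ hfin
    rw [hcard, Set.ncard_pair hne]
  have : y ∈ ({W.getVert (i - 1), W.getVert (i + 1)} : Set V) := by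
    rw [heq]; exact hadj
  simpa using this

lemma aux_lower (hG : G.Connected) [Finite V] {u w : V} {W : G.Walk u w} (hW : W.IsPath)
    (hdeg : ∀ x ∈ W.support, x ≠ u → x ≠ w → (G.neighborSet x).ncard = 2)
    (v : V) (hv : v ∉ W.support) :
    ∀ (n i : ℕ), i ≤ W.length → ∀ R : G.Walk (W.getVert i) v, R.length ≤ n →
      min (i + G.dist u v) ((W.length - i) + G.dist w v) ≤ R.length := by
  intro n
  induction n with
  | zero =>
      intro i hi R hR
      exfalso
      have : W.getVert i = v := by
        cases R with
        | nil => rfl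
        | cons h R => simp at hR
      exact hv (this ▸ Walk.mem_support_iff_exists_getVert.mpr ⟨i, rfl, hi⟩)
  | succ n ih =>
      intro i hi R hR
      by_cases h0 : i = 0
      · subst h0
        have : G.dist u v ≤ R.length := by
          have := dist_le (R.copy (W.getVert_zero) rfl)
          simpa using this
        have := min_le_left (0 + G.dist u v) ((W.length - 0) + G.dist w v)
        omega
      by_cases hl : i = W.length
      · subst hl
        have : G.dist w v ≤ R.length := by
          have := dist_le (R.copy (W.getVert_length) rfl)
          simpa using this
        have := min_le_right (W.length + G.dist u v)
          ((W.length - W.length) + G.dist w v)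
        omega
      · have hxv : W.getVert i ≠ v := fun h =>
          hv (h ▸ Walk.mem_support_iff_exists_getVert.mpr ⟨i, rfl, hi⟩)
        cases R with
        | nil => exact absurd rfl hxv
        | cons hadj R' =>
            rename_i y
            have hy := aux_neighbors hW hdeg (by omega) (by omega) hadj
            rcases hy with hy | hy
            · subst hy
              have := ih (i - 1) (by omega) R' (by simpa using hR)
              simp only [Walk.length_cons]
              have h1 : W.length - (i - 1) ≤ W.length - i + 1 := by omega
              omega
            · subst hy
              have := ih (i + 1) (by omega) R' (by simpa using hR)
              simp only [Walk.length_cons]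
              have h1 : W.length - (i + 1) + 1 = W.length - i := by omega
              omega

end Aux

/-- For a path branch `C` of `G` with endpoints `p`, `q`, an interior vertex `s`
of `C`, and a vertex `v` of `G` not on `C`,
`d(s,v) = min (d_C(s,p) + d(p,v)) (d_C(s,q) + d(q,v))`,
where the position of `s` along `C` (its index in the support of `C`, i.e. its
distance from `p` along `C`) gives `d_C(s,p)`. -/
theorem dist_from_branch_interior (V : Type) [Fintype V] [DecidableEq V]
    (G : SimpleGraph V) (hG : G.Connected) (p q : V) (W : G.Walk p q)
    (hW : IsBranch G W) (hpath : W.IsPath) (s : V)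
    (hs : s ∈ W.support) (hsp : s ≠ p) (hsq : s ≠ q)
    (v : V) (hv : v ∉ W.support) :
    G.dist s v =
      min (W.support.idxOf s + G.dist p v)
        ((W.length - W.support.idxOf s) + G.dist q v) := by
  set i := W.support.idxOf s with hidef
  have hilt : i < W.support.length := List.idxOf_lt_length_iff.mpr hs
  have hile : i ≤ W.length := by rw [Walk.length_support] at hilt; omega
  have hsi : W.getVert i = s := by
    rw [← aux_support_getElem W i hilt]
    exact List.getElem_idxOf hilt
  have hdeg := hW.1.2
  apply le_antisymm
  · apply le_min
    · have h1 : G.dist s v ≤ G.dist s p + G.dist p v := hG.dist_triangle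
      have h2 : G.dist s p ≤ i := by
        rw [dist_comm, ← hsi]
        exact aux_dist_getVert_le hG W i hile
      omega
    · have h1 : G.dist s v ≤ G.dist s q + G.dist q v := hG.dist_triangle
      have h2 : G.dist s q ≤ W.length - i := by
        rw [dist_comm, ← hsi]
        have := aux_dist_getVert_le hG W.reverse (W.length - i) (by simp)
        rwa [Walk.getVert_reverse, Nat.sub_sub_self hile] at this
      omega
  · obtain ⟨R, hR⟩ := hG.exists_walk_length_eq_dist s v
    rw [← hR]
    have := aux_lower hG hpath hdeg v hv R.length i hile (R.copy hsi.symm rfl)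
      (by simp)
    simpa using this
end

section
/- Let G be a connected finite graph, let C be a branch of G that is a path with endpoints p and q, and let v be a fixed vertex of G not on C. Then, as a function of the position x of a vertex s along C (so that d_C(s,p) = x and d_C(s,q) = L − x where L is the length of C), the shortest-path distance d(s,v) in G is a piecewise linear function of x with at most one breakpoint; that is, there exists a threshold x₀ such that d(s,v) = x + d(p,v) for x ≤ x₀ and d(s,v) = (L − x) + d(q,v) for x ≥ x₀. -/
open SimpleGraph

variable {V : Type*}

lemma support_getElem' {G : SimpleGraph V} :
    ∀ {u w : V} (W : G.Walk u w) (i : ℕ) (h : i < W.support.length), W.support[i] = W.getVert i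
  | _, _, .nil, 0, _ => rfl
  | _, _, .cons _ _, 0, _ => rfl
  | _, _, .cons _ P, (i+1), h => by
      simpa [Walk.getVert_cons_succ] using
        support_getElem' P i (by simp at h ⊢; omega)

lemma dist_le_getVert {G : SimpleGraph V} (hG : G.Connected) :
    ∀ {u w : V} (W : G.Walk u w) (i : ℕ), i ≤ W.length → G.dist u (W.getVert i) ≤ i := by
  intro u w W
  induction W with
  | nil =>
    intro i hi
    have : i = 0 := by simpa using hi
    subst this
    simp [Walk.getVert_zero]
  | @cons u t w hadj P ih =>
    intro i hi
    cases i with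
    | zero => simp [Walk.getVert_zero]
    | succ n =>
      rw [Walk.getVert_cons_succ]
      have h1 : G.dist u t ≤ 1 := dist_le (Walk.cons hadj Walk.nil)
      have h2 := ih n (by simpa [Walk.length_cons] using hi)
      calc G.dist u (P.getVert n) ≤ G.dist u t + G.dist t (P.getVert n) := hG.dist_triangle
        _ ≤ n + 1 := by omega

/-- For a path branch `C` of `G` of length `L` with endpoints `p`, `q` and a
vertex `v` not on `C`, the distance from a vertex `s` of `C` at position `x`
along `C` to `v` is piecewise linear in `x` with at most one breakpoint: there
is a threshold `x₀` with `d(s,v) = x + d(p,v)` for `x ≤ x₀` and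
`d(s,v) = (L - x) + d(q,v)` for `x ≥ x₀`. -/
theorem dist_from_branch_piecewise_linear (V : Type) [Fintype V] [DecidableEq V]
    (G : SimpleGraph V) (hG : G.Connected) (p q : V) (W : G.Walk p q)
    (hW : IsBranch G W) (hpath : W.IsPath)
    (v : V) (hv : v ∉ W.support) :
    ∃ x₀ : ℝ, ∀ s ∈ W.support,
      ((W.support.idxOf s : ℝ) ≤ x₀ →
        G.dist s v = W.support.idxOf s + G.dist p v) ∧
      (x₀ ≤ (W.support.idxOf s : ℝ) →
        G.dist s v = (W.length - W.support.idxOf s) + G.dist q v) := by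
  classical
  have hnodup := hpath.support_nodup
  -- indexOf of getVert
  have hidx : ∀ j ≤ W.length, W.support.idxOf (W.getVert j) = j := by
    intro j hj
    have hj' : j < W.support.length := by rw [Walk.length_support]; omega
    rw [← support_getElem' W j hj']
    exact hnodup.idxOf_getElem j hj'
  have hinj : ∀ j k, j ≤ W.length → k ≤ W.length → W.getVert j = W.getVert k → j = k := by
    intro j k hj hk h
    rw [← hidx j hj, ← hidx k hk, h]
  -- neighbor sets of internal vertices
  have hnbr : ∀ j, 0 < j → j < W.length →
      G.neighborSet (W.getVert j) = {W.getVert (j-1), W.getVert (j+1)} := by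
    intro j hj0 hjL
    have hmem : W.getVert j ∈ W.support :=
      Walk.mem_support_iff_exists_getVert.2 ⟨j, rfl, le_of_lt hjL⟩
    have hnp : W.getVert j ≠ p := by
      intro h
      have := hinj j 0 (le_of_lt hjL) (Nat.zero_le _) (by rw [h, Walk.getVert_zero])
      omega
    have hnq : W.getVert j ≠ q := by
      intro h
      have := hinj j W.length (le_of_lt hjL) le_rfl (by rw [h, Walk.getVert_length])
      omega
    have hcard := hW.1.2 _ hmem hnp hnq
    have hadj1 : G.Adj (W.getVert (j-1)) (W.getVert j) := by
      have := W.adj_getVert_succ (i := j-1) (by omega)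
      rwa [Nat.sub_add_cancel hj0] at this
    have hadj2 : G.Adj (W.getVert j) (W.getVert (j+1)) := W.adj_getVert_succ hjL
    have hne : W.getVert (j-1) ≠ W.getVert (j+1) := by
      intro h
      have := hinj (j-1) (j+1) (by omega) (by omega) h
      omega
    have hsub : ({W.getVert (j-1), W.getVert (j+1)} : Set V) ⊆ G.neighborSet (W.getVert j) := by
      intro t ht
      simp only [Set.mem_insert_iff, Set.mem_singleton_iff] at ht
      rcases ht with rfl | rfl
      · exact hadj1.symm
      · exact hadj2
    exact (Set.eq_of_subset_of_ncard_le hsub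
      (by rw [hcard, Set.ncard_pair hne]) (Set.toFinite _)).symm
  -- lower bound on walk lengths
  have hlow : ∀ (y : V) (P : G.Walk y v) (j : ℕ), j ≤ W.length → W.getVert j = y →
      G.dist p v + j ≤ P.length ∨ G.dist q v + (W.length - j) ≤ P.length := by
    intro y P
    induction P with
    | nil =>
      intro j hj hjy
      exact absurd (hjy ▸ Walk.mem_support_iff_exists_getVert.2 ⟨j, rfl, hj⟩) hv
    | @cons y t _ hadj P ih =>
      intro j hj hjy
      rcases Nat.eq_zero_or_pos j with rfl | hj0
      · left
        have hy : y = p := by rw [← hjy, Walk.getVert_zero]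
        subst hy
        simpa using dist_le (Walk.cons hadj P)
      rcases eq_or_lt_of_le hj with rfl | hjL
      · right
        have hy : y = q := by rw [← hjy, Walk.getVert_length]
        subst hy
        simpa using dist_le (Walk.cons hadj P)
      · have ht : t ∈ G.neighborSet y := hadj
        rw [← hjy, hnbr j hj0 hjL] at ht
        simp only [Set.mem_insert_iff, Set.mem_singleton_iff] at ht
        rcases ht with rfl | rfl
        · rcases ih hv (j-1) (by omega) rfl with h | h
          · left; rw [Walk.length_cons]; omega
          · right; rw [Walk.length_cons]; omega
        · rcases ih hv (j+1) (by omega) rfl with h | h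
          · left; rw [Walk.length_cons]; omega
          · right; rw [Walk.length_cons]; omega
  refine ⟨((W.length : ℝ) + G.dist q v - G.dist p v) / 2, ?_⟩
  intro s hs
  have hilt : W.support.idxOf s < W.support.length := List.idxOf_lt_length_iff.2 hs
  set i := W.support.idxOf s with hidef
  have hiL : i ≤ W.length := by rw [Walk.length_support] at hilt; omega
  have hgv : W.getVert i = s := by
    rw [← support_getElem' W i hilt]
    exact List.getElem_idxOf hilt
  have hup1 : G.dist s v ≤ i + G.dist p v := by
    have h1 : G.dist s p ≤ i := by
      have := dist_le_getVert hG W i hiL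
      rw [hgv] at this
      rwa [SimpleGraph.dist_comm]
    calc G.dist s v ≤ G.dist s p + G.dist p v := hG.dist_triangle
      _ ≤ i + G.dist p v := by omega
  have hup2 : G.dist s v ≤ (W.length - i) + G.dist q v := by
    have h1 : G.dist s q ≤ W.length - i := by
      have := dist_le_getVert hG W.reverse (W.length - i) (by rw [Walk.length_reverse]; omega)
      rw [Walk.getVert_reverse, Nat.sub_sub_self hiL, hgv] at this
      rwa [SimpleGraph.dist_comm]
    calc G.dist s v ≤ G.dist s q + G.dist q v := hG.dist_triangle
      _ ≤ (W.length - i) + G.dist q v := by omega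
  obtain ⟨P, hP⟩ := hG.exists_walk_length_eq_dist s v
  have hlow' := hlow s P i hiL hgv
  rw [hP] at hlow'
  constructor
  · intro hx
    have hc : 2 * i + G.dist p v ≤ W.length + G.dist q v := by
      have : 2 * (i : ℝ) + G.dist p v ≤ (W.length : ℝ) + G.dist q v := by
        rw [hidef] at hx; linarith
      exact_mod_cast this
    omega
  · intro hx
    have hc : W.length + G.dist q v ≤ 2 * i + G.dist p v := by
      have : (W.length : ℝ) + G.dist q v ≤ 2 * (i : ℝ) + G.dist p v := by
        rw [hidef] at hx; linarith
      exact_mod_cast this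
    omega
end
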